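/- arXiv:1202.3276 — 5 statements merged into one kernel-verified Lean document; each statement's English description precedes it below -/
import Mathlib

section
/- Let Γ be a connected, locally finite graph, let S ⊆ V(Γ) be a finite set of vertices, and let k ≥ 1. Then there are only finitely many k-cuts C of Γ with βC ∩ S ≠ ∅. -/
open Pointwise

universe u

namespace CFGroups

variable {V : Type u}

/-- The edge boundary of `C`: adjacent ordered pairs `(u,v)` with `u ∈ C`, `v ∉ C`.
These are in canonical bijection with the undirected edges of `δC`. -/
def edgeBoundary (G : SimpleGraph V) (C : Set V) : Set (V × V) :=
  {p : V × V | G.Adj p.1 p.2 ∧ p.1 ∈ C ∧ p.2 ∉ C}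

/-- The vertex boundary `βC`: endpoints of edges of `δC`. -/
def vertexBoundary (G : SimpleGraph V) (C : Set V) : Set V :=
  {u : V | ∃ v : V, G.Adj u v ∧ ((u ∈ C ∧ v ∉ C) ∨ (v ∈ C ∧ u ∉ C))}

/-- A cut: `C` and its complement are nonempty and connected, and `δC` is finite. -/
def IsCut (G : SimpleGraph V) (C : Set V) : Prop :=
  C.Nonempty ∧ Cᶜ.Nonempty ∧ (G.induce C).Connected ∧ (G.induce Cᶜ).Connected ∧
    (edgeBoundary G C).Finite

/-- The weight `|δC|` of a cut. -/
noncomputable def weight (G : SimpleGraph V) (C : Set V) : ℕ :=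
  (edgeBoundary G C).ncard

/-- A `k`-cut: a cut of weight at most `k`. -/
def IsCutLe (G : SimpleGraph V) (k : ℕ) (C : Set V) : Prop :=
  IsCut G C ∧ weight G C ≤ k

/-- Two cuts are nested. -/
def Nested (C D : Set V) : Prop :=
  C ⊆ D ∨ C ⊆ Dᶜ ∨ Cᶜ ⊆ D ∨ Cᶜ ⊆ Dᶜ

/-- A bi-infinite simple path, as an injective `ℤ`-indexed sequence of successively
adjacent vertices. -/
def IsBiInfinitePath (G : SimpleGraph V) (α : ℤ → V) : Prop :=
  Function.Injective α ∧ ∀ i : ℤ, G.Adj (α i) (α (i + 1))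

/-- A one-sided infinite simple path. -/
def IsRayPath (G : SimpleGraph V) (γ : ℕ → V) : Prop :=
  Function.Injective γ ∧ ∀ i : ℕ, G.Adj (γ i) (γ (i + 1))

/-- `C(α)`: the cuts splitting the bi-infinite simple path `α` into two infinite pieces. -/
def cutsSplitting (G : SimpleGraph V) (α : ℤ → V) : Set (Set V) :=
  {C : Set V | IsCut G C ∧ (Set.range α ∩ C).Infinite ∧ (Set.range α ∩ Cᶜ).Infinite}

/-- `C_min(α)`: the cuts of minimal weight in `C(α)`. -/
def cutsMin (G : SimpleGraph V) (α : ℤ → V) : Set (Set V) :=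
  {C ∈ cutsSplitting G α | ∀ D ∈ cutsSplitting G α, weight G C ≤ weight G D}

/-- `Γ` is accessible with constant `k`: every bi-infinite simple path with `C(α) ≠ ∅`
admits a `k`-cut in `C(α)`. -/
def AccessibleWith (G : SimpleGraph V) (k : ℕ) : Prop :=
  ∀ α : ℤ → V, IsBiInfinitePath G α → (cutsSplitting G α).Nonempty →
    ∃ C ∈ cutsSplitting G α, weight G C ≤ k

/-- An accessible graph. -/
def Accessible (G : SimpleGraph V) : Prop := ∃ k : ℕ, AccessibleWith G k

/-- `m(C)`: the number of `k`-cuts not nested with `C`. -/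
noncomputable def mdeg (G : SimpleGraph V) (k : ℕ) (C : Set V) : ℕ :=
  Set.ncard {D : Set V | IsCutLe G k D ∧ ¬ Nested C D}

/-- `C_opt(α)`: the cuts of `C_min(α)` minimizing `m`. -/
def cutsOpt (G : SimpleGraph V) (k : ℕ) (α : ℤ → V) : Set (Set V) :=
  {C ∈ cutsMin G α | ∀ D ∈ cutsMin G α, mdeg G k C ≤ mdeg G k D}

/-- `C_opt`: the optimally nested cuts. -/
def COpt (G : SimpleGraph V) (k : ℕ) : Set (Set V) :=
  {C : Set V | ∃ α : ℤ → V, IsBiInfinitePath G α ∧ C ∈ cutsOpt G k α}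

/-- The relation `C ∼ D` on optimal cuts. -/
def SimRel (G : SimpleGraph V) (k : ℕ) (C D : Set V) : Prop :=
  C = D ∨ (Cᶜ ⊂ D ∧ ∀ E ∈ COpt G k, Cᶜ ⊂ E → E ⊆ D → E = D)

/-- The equivalence class `[C]` of an optimal cut `C` under `∼`. -/
def cls (G : SimpleGraph V) (k : ℕ) (C : Set V) : Set (Set V) :=
  {D ∈ COpt G k | SimRel G k C D}

/-- The structure tree `T(C_opt)`: vertices are the classes `[C]`, `C ∈ C_opt`, and for each
`C ∈ C_opt` there is an edge joining `[C]` and `[C*]`. -/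
def structureTree (G : SimpleGraph V) (k : ℕ) :
    SimpleGraph {S : Set (Set V) // ∃ C ∈ COpt G k, S = cls G k C} where
  Adj X Y := X ≠ Y ∧ ∃ C ∈ COpt G k,
    (X.1 = cls G k C ∧ Y.1 = cls G k Cᶜ) ∨ (Y.1 = cls G k C ∧ X.1 = cls G k Cᶜ)
  symm := ⟨by
    rintro X Y ⟨hne, C, hC, h⟩
    exact ⟨hne.symm, C, hC, h.symm⟩⟩
  loopless := ⟨fun X h => h.1 rfl⟩

/-- A locally finite graph. -/
def LocallyFiniteGraph (G : SimpleGraph V) : Prop :=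
  ∀ v : V, (G.neighborSet v).Finite

/-- The `r`-th neighbourhood `N^r S` of a set of vertices. -/
def nbhd (G : SimpleGraph V) (r : ℕ) (S : Set V) : Set V :=
  {v : V | ∃ u ∈ S, G.dist v u ≤ r}

/-- The block `B[C] = ⋂_{D ∼ C} N^κ D` assigned to the vertex `[C]` of the structure tree. -/
def block (G : SimpleGraph V) (k κ : ℕ) (C : Set V) : Set V :=
  ⋂ D ∈ cls G k C, nbhd G κ D

/-- `Aut(Γ)\Γ` is finite: the automorphism group of `Γ` acts with finitely many
vertex orbits and finitely many edge orbits. -/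
def AutFinOrbits (G : SimpleGraph V) : Prop :=
  (Set.range fun v : V => Set.range fun φ : G ≃g G => φ v).Finite ∧
  (Set.range fun e : G.edgeSet => Set.range fun φ : G ≃g G => Sym2.map ⇑φ e.1).Finite

/-- A group `H` (equipped with an action on the vertices) acts on the graph `G`
by graph automorphisms. -/
def ActsOn (G : SimpleGraph V) (H : Type u) [Group H] [MulAction H V] : Prop :=
  ∀ (g : H) (u v : V), G.Adj u v ↔ G.Adj (g • u) (g • v)

/-- `G\Γ` is finite: finitely many vertex orbits and finitely many edge orbits. -/
def ActFinOrbits (G : SimpleGraph V) (H : Type u) [Group H] [MulAction H V] : Prop :=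
  (Set.range fun v : V => Set.range fun g : H => g • v).Finite ∧
  (Set.range fun e : G.edgeSet => Set.range fun g : H => Sym2.map (fun v => g • v) e.1).Finite

/-- The graph has more than one end: some finite vertex set can be removed so that at least
two infinite connected components remain. -/
def MoreThanOneEnd (G : SimpleGraph V) : Prop :=
  ∃ S : Set V, S.Finite ∧ ∃ K₁ K₂ : (G.induce Sᶜ).ConnectedComponent,
    K₁ ≠ K₂ ∧ K₁.supp.Infinite ∧ K₂.supp.Infinite

/-- The Cayley graph of a group w.r.t. a generating set `S` (edges labelled by `S ∪ S⁻¹`). -/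
def cayleyGraph (K : Type u) [Group K] (S : Set K) : SimpleGraph K where
  Adj g h := g ≠ h ∧ (g⁻¹ * h ∈ S ∨ h⁻¹ * g ∈ S)
  symm := ⟨by rintro g h ⟨hne, hs⟩; exact ⟨hne.symm, hs.symm⟩⟩
  loopless := ⟨fun g h => h.1 rfl⟩

/-- A finitely generated group all of whose Cayley graphs have at most one end. -/
def FGOneEnded (K : Type u) [Group K] : Prop :=
  Group.FG K ∧ ∀ S : Set K, S.Finite → Subgroup.closure S = ⊤ →
    ¬ MoreThanOneEnd (cayleyGraph K S)

/-- An accessible group: it acts on a tree with finitely many orbits, finite edge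
stabilizers, and all vertex stabilizers finitely generated with at most one end. -/
def GroupAccessible (K : Type u) [Group K] : Prop :=
  ∃ (T : Type u) (tr : SimpleGraph T) (φ : K →* Equiv.Perm T),
    tr.IsTree ∧
    (∀ (g : K) (u v : T), tr.Adj u v ↔ tr.Adj (φ g u) (φ g v)) ∧
    (Set.range fun t : T => Set.range fun g : K => φ g t).Finite ∧
    (Set.range fun e : tr.edgeSet => Set.range fun g : K => Sym2.map ⇑(φ g) e.1).Finite ∧
    (∀ e ∈ tr.edgeSet, {g : K | Sym2.map ⇑(φ g) e = e}.Finite) ∧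
    (∀ t : T, ∃ L : Subgroup K, (L : Set K) = {g : K | φ g t = t} ∧ FGOneEnded ↥L)

/-- A tree decomposition of `G`. -/
def IsTreeDecomp (G : SimpleGraph V) {T : Type u} (tr : SimpleGraph T) (X : T → Set V) : Prop :=
  tr.IsTree ∧ (∀ v : V, ∃ t : T, v ∈ X t) ∧
  (∀ u v : V, G.Adj u v → ∃ t : T, u ∈ X t ∧ v ∈ X t) ∧
  (∀ v : V, (tr.induce {t : T | v ∈ X t}).Connected)

/-- `G` has treewidth at most `w`. -/
def TreewidthAtMost (G : SimpleGraph V) (w : ℕ) : Prop :=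
  ∃ (T : Type u) (tr : SimpleGraph T) (X : T → Set V),
    IsTreeDecomp G tr X ∧ ∀ t : T, (X t).Finite ∧ (X t).ncard ≤ w + 1

/-- `G` has finite treewidth. -/
def FiniteTreewidth (G : SimpleGraph V) : Prop := ∃ w : ℕ, TreewidthAtMost G w

/-- Uniformly bounded vertex degrees. -/
def UnifBoundedDegree (G : SimpleGraph V) : Prop :=
  ∃ d : ℕ, ∀ v : V, (G.neighborSet v).Finite ∧ (G.neighborSet v).ncard ≤ d

/-- A class of groups (in universe `u`), as a property of groups. -/
def VirtuallyIn (𝒢 : (K : Type u) → [inst : Group K] → Prop) (K : Type u) [Group K] : Prop :=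
  ∃ L : Subgroup K, L.FiniteIndex ∧ 𝒢 ↥L

/-- `K` has a quasi-isometric section: for some monoid presentation `π : Σ* → K` with
finite alphabet there is a section `σ` of `π` with `σ(1) = ε` which is quasi-isometric
w.r.t. the tree metric on `Σ*`; `d(u,v) ≤ k` is expressed via a common prefix
decomposition `u = p u'`, `v = p v'` with `|u'| + |v'| ≤ k`. -/
def HasQIS (K : Type u) [Group K] : Prop :=
  ∃ (A : Type u) (_ : Finite A) (π : List A → K),
    (∀ u v : List A, π (u ++ v) = π u * π v) ∧ π [] = 1 ∧ Function.Surjective π ∧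
    ∃ (σ : K → List A) (k : ℕ), 1 ≤ k ∧ σ 1 = [] ∧ (∀ g : K, π (σ g) = g) ∧
      ∀ (g : K) (a : A), ∃ p u' v' : List A,
        σ g = p ++ u' ∧ σ (g * π [a]) = p ++ v' ∧ u'.length + v'.length ≤ k

/-- A context-free group: the word problem w.r.t. some surjective monoid presentation
over a finite alphabet is a context-free language. -/
def IsContextFreeGroup (K : Type u) [Group K] : Prop :=
  ∃ (A : Type u) (_ : Finite A) (π : List A → K),
    (∀ u v : List A, π (u ++ v) = π u * π v) ∧ π [] = 1 ∧ Function.Surjective π ∧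
    Language.IsContextFree ({w : List A | π w = 1} : Language A)

end CFGroups

namespace StmtZeroAux

open CFGroups

variable {V : Type u}

/-- `F` is a minimal `x`-`y` edge separator in `H`. -/
def IsMinSep (H : SimpleGraph V) (x y : V) (F : Set (Sym2 V)) : Prop :=
  F ⊆ H.edgeSet ∧ ¬ (H.deleteEdges F).Reachable x y ∧
    ∀ f ∈ F, (H.deleteEdges (F \ {f})).Reachable x y

lemma crossWalk {H : SimpleGraph V} {C : Set V} {a b : V} (w : H.Walk a b) :
    a ∈ C → b ∉ C → ∃ u v, H.Adj u v ∧ u ∈ C ∧ v ∉ C := by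
  induction w with
  | nil => intro ha hb; exact absurd ha hb
  | @cons a c b h p ih =>
    intro ha hb
    by_cases hc : c ∈ C
    · exact ih hc hb
    · exact ⟨a, c, h, ha, hc⟩

lemma minSep_finite : ∀ (k : ℕ) (H : SimpleGraph V) (x y : V),
    {F : Set (Sym2 V) | IsMinSep H x y F ∧ F.Finite ∧ F.ncard ≤ k}.Finite := by
  intro k
  induction k with
  | zero =>
    intro H x y
    apply Set.Finite.subset (Set.finite_singleton (∅ : Set (Sym2 V)))
    rintro F ⟨-, hfin, hcard⟩
    simpa using (Set.ncard_eq_zero hfin).mp (Nat.le_zero.mp hcard)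
  | succ k ih =>
    intro H x y
    classical
    by_cases hr : H.Reachable x y
    · obtain ⟨w⟩ := hr
      have hsub : {F : Set (Sym2 V) | IsMinSep H x y F ∧ F.Finite ∧ F.ncard ≤ k + 1} ⊆
          ⋃ e ∈ (w.edges.toFinset : Set (Sym2 V)),
            {F : Set (Sym2 V) | e ∈ F ∧ IsMinSep H x y F ∧ F.Finite ∧ F.ncard ≤ k + 1} := by
        rintro F ⟨hmin, hfin, hcard⟩
        have hex : ∃ e ∈ w.edges, e ∈ F := by
          by_contra hno
          push_neg at hno
          exact hmin.2.1 (w.toDeleteEdges F hno).reachable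
        obtain ⟨e, hew, heF⟩ := hex
        exact Set.mem_biUnion (by simpa using hew) ⟨heF, hmin, hfin, hcard⟩
      apply Set.Finite.subset _ hsub
      apply Set.Finite.biUnion (w.edges.toFinset.finite_toSet)
      intro e _
      apply Set.Finite.of_finite_image (f := fun F => F \ {e})
      · apply Set.Finite.subset (ih (H.deleteEdges {e}) x y)
        rintro F' ⟨F, ⟨heF, ⟨hFsub, hFsep, hFmin⟩, hfin, hcard⟩, rfl⟩
        have hone : ({e} : Set (Sym2 V)) ⊆ F := Set.singleton_subset_iff.mpr heF
        refine ⟨⟨?_, ?_, ?_⟩, hfin.diff, ?_⟩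
        · intro a ha
          rw [SimpleGraph.edgeSet_deleteEdges]
          exact ⟨hFsub ha.1, ha.2⟩
        · rw [SimpleGraph.deleteEdges_deleteEdges, Set.union_diff_cancel hone]
          exact hFsep
        · intro f hf
          rw [SimpleGraph.deleteEdges_deleteEdges]
          have hEq : ({e} : Set (Sym2 V)) ∪ (F \ {e}) \ {f} = F \ {f} := by
            have hfe : f ≠ e := hf.2
            ext a
            simp only [Set.mem_union, Set.mem_diff, Set.mem_singleton_iff]
            constructor
            · rintro (rfl | ⟨⟨haF, -⟩, hne⟩)
              · exact ⟨heF, fun h => hfe h.symm⟩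
              · exact ⟨haF, hne⟩
            · rintro ⟨haF, hne⟩
              by_cases hae : a = e
              · exact Or.inl hae
              · exact Or.inr ⟨⟨haF, hae⟩, hne⟩
          rw [hEq]
          exact hFmin f hf.1
        · have := Set.ncard_diff_singleton_lt_of_mem heF hfin
          show (F \ {e}).ncard ≤ k
          omega
      · intro F₁ h₁ F₂ h₂ heq
        replace heq : F₁ \ {e} = F₂ \ {e} := heq
        ext a
        by_cases hae : a = e
        · subst hae; simp [h₁.1, h₂.1]
        · constructor
          · intro haF
            have : a ∈ F₂ \ {e} := heq ▸ (⟨haF, hae⟩ : a ∈ F₁ \ {e})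
            exact this.1
          · intro haF
            have : a ∈ F₁ \ {e} := heq.symm ▸ (⟨haF, hae⟩ : a ∈ F₂ \ {e})
            exact this.1
    · apply Set.Finite.subset (Set.finite_singleton (∅ : Set (Sym2 V)))
      rintro F ⟨⟨-, -, hmin⟩, -, -⟩
      simp only [Set.mem_singleton_iff]
      by_contra hne
      obtain ⟨f, hf⟩ := Set.nonempty_iff_ne_empty.mpr hne
      exact hr ((hmin f hf).mono (SimpleGraph.deleteEdges_le _))

/-- The set of (undirected) boundary edges of `C`. -/
def bF (G : SimpleGraph V) (C : Set V) : Set (Sym2 V) :=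
  (fun p : V × V => s(p.1, p.2)) '' edgeBoundary G C

lemma mem_bF {G : SimpleGraph V} {C : Set V} {u v : V}
    (hadj : G.Adj u v) (hu : u ∈ C) (hv : v ∉ C) : s(u, v) ∈ bF G C :=
  ⟨(u, v), ⟨hadj, hu, hv⟩, rfl⟩

lemma not_mem_bF {G : SimpleGraph V} {C : Set V} {u v : V}
    (h : u ∈ C ↔ v ∈ C) : s(u, v) ∉ bF G C := by
  rintro ⟨⟨a, b⟩, ⟨-, haC, hbC⟩, he⟩
  rcases Sym2.eq_iff.mp he with ⟨rfl, rfl⟩ | ⟨rfl, rfl⟩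
  · exact hbC (h.mp haC)
  · exact hbC (h.mpr haC)

lemma reach_del {G : SimpleGraph V} {C : Set V} (hC : (G.induce C).Connected)
    {E₀ : Set (Sym2 V)} (hE : ∀ a b : V, a ∈ C → b ∈ C → s(a, b) ∉ E₀)
    {u v : V} (hu : u ∈ C) (hv : v ∈ C) : (G.deleteEdges E₀).Reachable u v := by
  let φ : G.induce C →g G.deleteEdges E₀ :=
    ⟨Subtype.val, fun {a b} h =>
      SimpleGraph.deleteEdges_adj.mpr ⟨h, hE _ _ a.2 b.2⟩⟩
  exact (hC.preconnected ⟨u, hu⟩ ⟨v, hv⟩).map φ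

lemma cut_eq_reach {G : SimpleGraph V} {C : Set V} (hcut : IsCut G C) {x : V}
    (hx : x ∈ C) : C = {v : V | (G.deleteEdges (bF G C)).Reachable x v} := by
  ext v
  constructor
  · intro hv
    exact reach_del hcut.2.2.1 (fun a b ha hb => not_mem_bF (by simp [ha, hb])) hx hv
  · intro hv
    by_contra hvC
    obtain ⟨w⟩ := (hv : (G.deleteEdges (bF G C)).Reachable x v)
    obtain ⟨a, b, hadj, haC, hbC⟩ := crossWalk w hx hvC
    obtain ⟨hadj', hnb⟩ := SimpleGraph.deleteEdges_adj.mp hadj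
    exact hnb (mem_bF hadj' haC hbC)

lemma bF_minsep {G : SimpleGraph V} {C : Set V} (hcut : IsCut G C) {x y : V}
    (hx : x ∈ C) (hy : y ∉ C) : IsMinSep G x y (bF G C) := by
  refine ⟨?_, ?_, ?_⟩
  · rintro e ⟨⟨a, b⟩, ⟨hadj, -, -⟩, rfl⟩
    exact hadj
  · rintro ⟨w⟩
    obtain ⟨a, b, hadj, haC, hbC⟩ := crossWalk w hx hy
    obtain ⟨hadj', hnb⟩ := SimpleGraph.deleteEdges_adj.mp hadj
    exact hnb (mem_bF hadj' haC hbC)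
  · rintro f ⟨⟨u, v⟩, ⟨hadj, huC, hvC⟩, rfl⟩
    have r1 : (G.deleteEdges (bF G C \ {s(u, v)})).Reachable x u :=
      reach_del hcut.2.2.1
        (fun a b ha hb h => not_mem_bF (C := C) (by simp [ha, hb]) h.1) hx huC
    have r2 : (G.deleteEdges (bF G C \ {s(u, v)})).Reachable v y :=
      reach_del hcut.2.2.2.1
        (fun a b ha hb h => not_mem_bF (C := C)
          (by simp [show a ∉ C from ha, show b ∉ C from hb]) h.1) hvC hy
    have hmid : (G.deleteEdges (bF G C \ {s(u, v)})).Adj u v :=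
      SimpleGraph.deleteEdges_adj.mpr ⟨hadj, fun h => h.2 rfl⟩
    exact (r1.trans hmid.reachable).trans r2

lemma bF_ncard {G : SimpleGraph V} {C : Set V} : (bF G C).ncard = weight G C := by
  apply Set.ncard_image_of_injOn
  rintro ⟨u, v⟩ ⟨-, huC, hvC⟩ ⟨a, b⟩ ⟨-, haC, hbC⟩ he
  rcases Sym2.eq_iff.mp he with ⟨rfl, rfl⟩ | ⟨rfl, rfl⟩
  · rfl
  · exact absurd huC hbC

lemma T1_finite (G : SimpleGraph V) (k : ℕ) (x y : V) :
    {C : Set V | IsCutLe G k C ∧ x ∈ C ∧ y ∉ C}.Finite := by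
  apply Set.Finite.of_finite_image (f := fun C => bF G C)
  · apply Set.Finite.subset (minSep_finite k G x y)
    rintro F ⟨C, ⟨⟨hcut, hw⟩, hx, hy⟩, rfl⟩
    refine ⟨bF_minsep hcut hx hy, hcut.2.2.2.2.image _, ?_⟩
    rw [bF_ncard]
    exact hw
  · intro C₁ h₁ C₂ h₂ heq
    replace heq : bF G C₁ = bF G C₂ := heq
    rw [cut_eq_reach h₁.1.1 h₁.2.1, cut_eq_reach h₂.1.1 h₂.2.1, heq]

end StmtZeroAux

open CFGroups in
/-- In a connected, locally finite graph, for finite `S` and `k ≥ 1`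
there are only finitely many `k`-cuts `C` with `βC ∩ S ≠ ∅`. -/
theorem finitely_many_kCuts_meeting_finite_set
    {V : Type u} (G : SimpleGraph V) (hconn : G.Connected)
    (hlf : CFGroups.LocallyFiniteGraph G)
    (S : Set V) (hS : S.Finite) (k : ℕ) (hk : 1 ≤ k) :
    {C : Set V | CFGroups.IsCutLe G k C ∧
      (CFGroups.vertexBoundary G C ∩ S).Nonempty}.Finite := by
  have hsub : {C : Set V | CFGroups.IsCutLe G k C ∧
      (CFGroups.vertexBoundary G C ∩ S).Nonempty} ⊆
      ⋃ s ∈ S, ⋃ v ∈ G.neighborSet s,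
        ({C : Set V | CFGroups.IsCutLe G k C ∧ s ∈ C ∧ v ∉ C} ∪
         {C : Set V | CFGroups.IsCutLe G k C ∧ v ∈ C ∧ s ∉ C}) := by
    rintro C ⟨hC, s, ⟨v, hadj, hcase⟩, hsS⟩
    refine Set.mem_biUnion hsS (Set.mem_biUnion (hadj : v ∈ G.neighborSet s) ?_)
    rcases hcase with h | h
    · exact Or.inl ⟨hC, h.1, h.2⟩
    · exact Or.inr ⟨hC, h.1, h.2⟩
  apply Set.Finite.subset _ hsub
  exact hS.biUnion fun s _ => (hlf s).biUnion fun v _ =>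
    (StmtZeroAux.T1_finite G k s v).union (StmtZeroAux.T1_finite G k v s)
end

section
/- Let Γ be a connected, locally finite graph, let k ∈ ℕ, and let C be a cut of Γ. Then the set of k-cuts D of Γ that are not nested with C is finite. -/
open Pointwise

universe u

section Aux

open CFGroups SimpleGraph

variable {V : Type u} {G : SimpleGraph V}

private lemma aux_mem_sym2_boundary {D : Set V} {a b : V}
    (h : s(a, b) ∈ Function.uncurry Sym2.mk '' CFGroups.edgeBoundary G D) :
    (a, b) ∈ CFGroups.edgeBoundary G D ∨ (b, a) ∈ CFGroups.edgeBoundary G D := by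
  obtain ⟨⟨x, y⟩, hxy, hs⟩ := h
  rw [Function.uncurry_apply_pair, Sym2.eq_iff] at hs
  rcases hs with ⟨rfl, rfl⟩ | ⟨rfl, rfl⟩
  · exact Or.inl hxy
  · exact Or.inr hxy

private lemma aux_reach_stay (M : Set (Sym2 V)) (S : Set V)
    (hM : ∀ x z, x ∈ S → z ∉ S → G.Adj x z → s(x, z) ∈ M) :
    ∀ {a b : V}, (G.deleteEdges M).Walk a b → a ∈ S → b ∈ S := by
  intro a b p
  induction p with
  | nil => exact id
  | @cons x y z h q ih =>
      intro hx
      rw [SimpleGraph.deleteEdges_adj] at h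
      by_cases hy : y ∈ S
      · exact ih hy
      · exact absurd (hM _ _ hx hy h.1) h.2

private lemma aux_induce_reach (M : Set (Sym2 V)) (S : Set V)
    (hM : ∀ x z, x ∈ S → z ∈ S → s(x, z) ∉ M) :
    ∀ {a b : ↥S}, (G.induce S).Walk a b → (G.deleteEdges M).Reachable ↑a ↑b := by
  intro a b p
  induction p with
  | nil => exact SimpleGraph.Reachable.refl _
  | @cons x y z h q ih =>
      have hadj : (G.deleteEdges M).Adj ↑x ↑y := by
        rw [SimpleGraph.deleteEdges_adj]
        exact ⟨h, hM _ _ x.2 y.2⟩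
      exact hadj.reachable.trans ih

/-- Only finitely many `k`-cuts have a given ordered pair in their boundary. -/
private lemma aux_finitely_many_cuts_through (G : SimpleGraph V) (k : ℕ) (e : V × V) :
    {D : Set V | CFGroups.IsCutLe G k D ∧ e ∈ CFGroups.edgeBoundary G D}.Finite := by
  obtain ⟨u, v⟩ := e
  set 𝒟 := {D : Set V | CFGroups.IsCutLe G k D ∧ (u, v) ∈ CFGroups.edgeBoundary G D} with h𝒟
  by_contra hfin
  have hinf : 𝒟.Infinite := hfin
  have : Infinite ↥𝒟 := hinf.to_subtype
  obtain ⟨U, hU⟩ := Filter.exists_ultrafilter_le (Filter.cofinite : Filter ↥𝒟)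
  have hnotfin : ∀ S : Set ↥𝒟, S.Finite → S ∉ U := by
    intro S hS hSU
    have h2 : Sᶜ ∈ U := hU hS.compl_mem_cofinite
    have h3 : (S ∩ Sᶜ : Set ↥𝒟) ∈ U := Filter.inter_mem hSU h2
    rw [Set.inter_compl_self] at h3
    exact Filter.empty_notMem (U : Filter ↥𝒟) h3
  have hcutD : ∀ D : ↥𝒟, CFGroups.IsCutLe G k (D : Set V) := fun D => D.2.1
  have hbdD : ∀ D : ↥𝒟, (u, v) ∈ CFGroups.edgeBoundary G (D : Set V) := fun D => D.2.2
  have huD : ∀ D : ↥𝒟, u ∈ (D : Set V) := fun D => (hbdD D).2.1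
  have hvD : ∀ D : ↥𝒟, v ∉ (D : Set V) := fun D => (hbdD D).2.2
  set F : Set (V × V) := {p | {D : ↥𝒟 | p ∈ CFGroups.edgeBoundary G (D : Set V)} ∈ U} with hF
  have hFfin : F.Finite := by
    by_contra hFinf
    obtain ⟨T, hTF, hTfin, hTcard⟩ :=
      Set.Infinite.exists_subset_ncard_eq (hFinf : F.Infinite) (k + 1)
    have hmem : (⋂ p ∈ T, {D : ↥𝒟 | p ∈ CFGroups.edgeBoundary G (D : Set V)}) ∈ U :=
      (Filter.biInter_mem hTfin).2 fun p hp => hTF hp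
    obtain ⟨D, hD⟩ := Filter.nonempty_of_mem hmem
    simp only [Set.mem_iInter] at hD
    have hsub : T ⊆ CFGroups.edgeBoundary G (D : Set V) := fun p hp => hD p hp
    have hDfin : (CFGroups.edgeBoundary G (D : Set V)).Finite := (hcutD D).1.2.2.2.2
    have hle := Set.ncard_le_ncard hsub hDfin
    have hw : CFGroups.weight G (D : Set V) ≤ k := (hcutD D).2
    rw [hTcard] at hle
    exact absurd (hle.trans hw) (by omega)
  set M : Set (Sym2 V) := Function.uncurry Sym2.mk '' F with hM
  set A : Set V := {w | (G.deleteEdges M).Reachable u w} with hA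
  set A' : Set V := {w | (G.deleteEdges M).Reachable v w} with hA'
  have hMD : ∀ (D : ↥𝒟) x z, x ∈ (D : Set V) → z ∉ (D : Set V) → G.Adj x z →
      s(x, z) ∈ Function.uncurry Sym2.mk '' CFGroups.edgeBoundary G (D : Set V) :=
    fun D x z hx hz hadj => ⟨(x, z), ⟨hadj, hx, hz⟩, rfl⟩
  have hMDc : ∀ (D : ↥𝒟) x z, x ∈ (D : Set V)ᶜ → z ∉ (D : Set V)ᶜ → G.Adj x z →
      s(x, z) ∈ Function.uncurry Sym2.mk '' CFGroups.edgeBoundary G (D : Set V) := by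
    intro D x z hx hz hadj
    exact ⟨(z, x), ⟨hadj.symm, not_not.mp hz, hx⟩, Sym2.eq_swap⟩
  by_cases hAA : (A ∩ A').Nonempty
  · obtain ⟨w, hw1, hw2⟩ := hAA
    obtain ⟨p₁⟩ := (hw1 : (G.deleteEdges M).Reachable u w)
    obtain ⟨p₂⟩ := (hw2 : (G.deleteEdges M).Reachable v w)
    set L : List (Sym2 V) := p₁.edges ++ p₂.edges with hL
    have hLU : (⋂ e ∈ {e | e ∈ L},
        {D : ↥𝒟 | e ∉ Function.uncurry Sym2.mk '' CFGroups.edgeBoundary G (D : Set V)}) ∈ U := by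
      refine (Filter.biInter_mem (List.finite_toSet L)).2 fun e he => ?_
      have heG : e ∈ (G.deleteEdges M).edgeSet := by
        rcases List.mem_append.mp he with h | h
        · exact p₁.edges_subset_edgeSet h
        · exact p₂.edges_subset_edgeSet h
      have heM : e ∉ M := by
        rw [SimpleGraph.edgeSet_deleteEdges] at heG
        exact heG.2
      induction e using Sym2.ind with
      | _ a b =>
        have ha : (a, b) ∉ F := fun h => heM ⟨(a, b), h, rfl⟩
        have hb : (b, a) ∉ F := fun h => heM ⟨(b, a), h, Sym2.eq_swap⟩
        have ha' : {D : ↥𝒟 | (a, b) ∈ CFGroups.edgeBoundary G (D : Set V)}ᶜ ∈ U :=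
          Ultrafilter.compl_mem_iff_notMem.2 ha
        have hb' : {D : ↥𝒟 | (b, a) ∈ CFGroups.edgeBoundary G (D : Set V)}ᶜ ∈ U :=
          Ultrafilter.compl_mem_iff_notMem.2 hb
        refine Filter.mem_of_superset (Filter.inter_mem ha' hb') ?_
        rintro D ⟨h1, h2⟩ hcon
        rcases aux_mem_sym2_boundary hcon with h | h
        · exact h1 h
        · exact h2 h
    obtain ⟨D, hD⟩ := Filter.nonempty_of_mem hLU
    simp only [Set.mem_iInter] at hD
    have hcond : ∀ e ∈ L, e ∈ (G.deleteEdges (Function.uncurry Sym2.mk '' CFGroups.edgeBoundary G (D : Set V))).edgeSet := by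
      intro e he
      rw [SimpleGraph.edgeSet_deleteEdges]
      have heG : e ∈ (G.deleteEdges M).edgeSet := by
        rcases List.mem_append.mp he with h | h
        · exact p₁.edges_subset_edgeSet h
        · exact p₂.edges_subset_edgeSet h
      rw [SimpleGraph.edgeSet_deleteEdges] at heG
      exact ⟨heG.1, hD e he⟩
    have q₁ := p₁.transfer (G.deleteEdges (Function.uncurry Sym2.mk '' CFGroups.edgeBoundary G (D : Set V)))
      (fun e he => hcond e (List.mem_append_left _ he))
    have q₂ := p₂.transfer (G.deleteEdges (Function.uncurry Sym2.mk '' CFGroups.edgeBoundary G (D : Set V)))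
      (fun e he => hcond e (List.mem_append_right _ he))
    have hwD : w ∈ (D : Set V) :=
      aux_reach_stay _ _ (hMD D) q₁ (huD D)
    have hwDc : w ∈ (D : Set V)ᶜ :=
      aux_reach_stay _ _ (hMDc D) q₂ (hvD D)
    exact hwDc hwD
  · have hT1 : (⋂ p ∈ F, {D : ↥𝒟 | p ∈ CFGroups.edgeBoundary G (D : Set V)}) ∈ U :=
      (Filter.biInter_mem hFfin).2 fun p hp => hp
    have hsub : (⋂ p ∈ F, {D : ↥𝒟 | p ∈ CFGroups.edgeBoundary G (D : Set V)}) ⊆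
        {D : ↥𝒟 | (D : Set V) = A} := by
      intro D hD
      simp only [Set.mem_iInter] at hD
      have hFD : F ⊆ CFGroups.edgeBoundary G (D : Set V) := fun p hp => hD p hp
      have hle : G.deleteEdges (Function.uncurry Sym2.mk '' CFGroups.edgeBoundary G (D : Set V)) ≤
          G.deleteEdges M := SimpleGraph.deleteEdges_anti (Set.image_mono hFD)
      have hnotin : ∀ x z, x ∈ (D : Set V) → z ∈ (D : Set V) →
          s(x, z) ∉ Function.uncurry Sym2.mk '' CFGroups.edgeBoundary G (D : Set V) := by
        intro x z hx hz hcon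
        rcases aux_mem_sym2_boundary hcon with h | h
        · exact h.2.2 hz
        · exact h.2.2 hx
      have hnotin' : ∀ x z, x ∈ (D : Set V)ᶜ → z ∈ (D : Set V)ᶜ →
          s(x, z) ∉ Function.uncurry Sym2.mk '' CFGroups.edgeBoundary G (D : Set V) := by
        intro x z hx hz hcon
        rcases aux_mem_sym2_boundary hcon with h | h
        · exact hx h.2.1
        · exact hz h.2.1
      have hDsubA : (D : Set V) ⊆ A := by
        intro w hwD
        obtain ⟨p⟩ := ((hcutD D).1.2.2.1).preconnected ⟨u, huD D⟩ ⟨w, hwD⟩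
        exact (aux_induce_reach _ _ hnotin p).mono hle
      have hDcsubA' : (D : Set V)ᶜ ⊆ A' := by
        intro w hwD
        obtain ⟨p⟩ := ((hcutD D).1.2.2.2.1).preconnected ⟨v, hvD D⟩ ⟨w, hwD⟩
        exact (aux_induce_reach _ _ hnotin' p).mono hle
      have hAsubD : A ⊆ (D : Set V) := by
        intro w hw
        by_contra hwD
        exact hAA ⟨w, hw, hDcsubA' hwD⟩
      exact Set.Subset.antisymm hDsubA hAsubD
    have hfinset : {D : ↥𝒟 | (D : Set V) = A}.Finite :=
      Set.Subsingleton.finite fun D hD E hE => Subtype.ext (hD.trans hE.symm)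
    exact hnotfin _ hfinset (Filter.mem_of_superset hT1 hsub)

end Aux

open CFGroups in
/-- In a connected, locally finite graph, for any cut `C` and any `k`,
only finitely many `k`-cuts are not nested with `C`. -/
theorem finitely_many_kCuts_not_nested
    {V : Type u} (G : SimpleGraph V) (hconn : G.Connected)
    (hlf : CFGroups.LocallyFiniteGraph G)
    (k : ℕ) (C : Set V) (hC : CFGroups.IsCut G C) :
    {D : Set V | CFGroups.IsCutLe G k D ∧ ¬ CFGroups.Nested C D}.Finite := by
  classical
  have hδC : (CFGroups.edgeBoundary G C).Finite := hC.2.2.2.2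
  have hβ : (CFGroups.vertexBoundary G C).Finite := by
    have hsub : CFGroups.vertexBoundary G C ⊆
        (Prod.fst '' CFGroups.edgeBoundary G C) ∪ (Prod.snd '' CFGroups.edgeBoundary G C) := by
      rintro x ⟨y, hadj, h | h⟩
      · exact Or.inl ⟨(x, y), ⟨hadj, h⟩, rfl⟩
      · exact Or.inr ⟨(y, x), ⟨hadj.symm, h⟩, rfl⟩
    exact ((hδC.image _).union (hδC.image _)).subset hsub
  have wk : ∀ p q : V, G.Walk p q := fun p q => Classical.choice (hconn.preconnected p q)
  set F₀ : Set (V × V) := ⋃ p ∈ CFGroups.vertexBoundary G C, ⋃ q ∈ CFGroups.vertexBoundary G C,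
      SimpleGraph.Dart.toProd '' {d | d ∈ (wk p q).darts} with hF₀
  have hF₀fin : F₀.Finite :=
    hβ.biUnion fun p _ => hβ.biUnion fun q _ => ((wk p q).darts.finite_toSet).image _
  have hsub : {D : Set V | CFGroups.IsCutLe G k D ∧ ¬CFGroups.Nested C D} ⊆
      ⋃ e ∈ F₀, {D : Set V | CFGroups.IsCutLe G k D ∧ e ∈ CFGroups.edgeBoundary G D} := by
    rintro D ⟨hD, hnn⟩
    simp only [CFGroups.Nested, not_or] at hnn
    obtain ⟨h1, h2, h3, h4⟩ := hnn
    obtain ⟨x1, hx1C, hx1D⟩ := Set.not_subset.mp h1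
    obtain ⟨x2, hx2C, hx2D'⟩ := Set.not_subset.mp h2
    obtain ⟨x3, hx3C, hx3D⟩ := Set.not_subset.mp h3
    obtain ⟨x4, hx4C, hx4D'⟩ := Set.not_subset.mp h4
    have hx2D : x2 ∈ D := not_not.mp hx2D'
    have hx4D : x4 ∈ D := not_not.mp hx4D'
    obtain ⟨hcut, hwgt⟩ := hD
    obtain ⟨hDne, hDcne, hDconn, hDcconn, hDfin⟩ := hcut
    obtain ⟨w1⟩ := hDconn.preconnected ⟨x2, hx2D⟩ ⟨x4, hx4D⟩
    obtain ⟨d1, _, hd1f, hd1s⟩ := w1.exists_boundary_dart (Subtype.val ⁻¹' C) hx2C hx4C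
    have hbβ : (d1.fst : V) ∈ CFGroups.vertexBoundary G C :=
      ⟨(d1.snd : V), d1.adj, Or.inl ⟨hd1f, hd1s⟩⟩
    have hbD : (d1.fst : V) ∈ D := d1.fst.2
    obtain ⟨w2⟩ := hDcconn.preconnected ⟨x1, hx1D⟩ ⟨x3, hx3D⟩
    obtain ⟨d2, _, hd2f, hd2s⟩ := w2.exists_boundary_dart (Subtype.val ⁻¹' C) hx1C hx3C
    have hb'β : (d2.fst : V) ∈ CFGroups.vertexBoundary G C :=
      ⟨(d2.snd : V), d2.adj, Or.inl ⟨hd2f, hd2s⟩⟩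
    have hb'D : (d2.fst : V) ∉ D := d2.fst.2
    obtain ⟨d0, hd0mem, hd0f, hd0s⟩ :=
      (wk (d1.fst : V) (d2.fst : V)).exists_boundary_dart D hbD hb'D
    have hd0F₀ : d0.toProd ∈ F₀ :=
      Set.mem_biUnion hbβ (Set.mem_biUnion hb'β ⟨d0, hd0mem, rfl⟩)
    exact Set.mem_biUnion hd0F₀
      ⟨⟨⟨hDne, hDcne, hDconn, hDcconn, hDfin⟩, hwgt⟩, d0.adj, hd0f, hd0s⟩
  exact (hF₀fin.biUnion fun e _ => aux_finitely_many_cuts_through G k e).subset hsub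
end

section
/- Let Γ be a connected, locally finite, accessible graph and let C, D ∈ C_opt. Then the set {E ∈ C_opt : C ⊆ E ⊆ D} is finite. -/
open Pointwise

universe u

section AuxFiniteness

open CFGroups SimpleGraph

variable {V : Type u}

/-- Reachability in the ambient graph from connectivity of an induced subgraph. -/
private lemma reach_of_induce (G : SimpleGraph V) {S : Set V} {c u : V}
    (h : (G.induce S).Connected) (hc : c ∈ S) (hu : u ∈ S) : G.Reachable c u :=
  (h.preconnected ⟨c, hc⟩ ⟨u, hu⟩).map (SimpleGraph.Embedding.induce S).toHom

private lemma induce_deleteEdges_eq (G : SimpleGraph V) {T : Set V} {x y : V}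
    (hnot : x ∉ T ∨ y ∉ T) :
    (G.deleteEdges {s(x, y)}).induce T = G.induce T := by
  ext a b
  simp only [comap_adj, deleteEdges_adj, Set.mem_singleton_iff]
  refine ⟨fun h => h.1, fun h => ⟨h, fun heq => ?_⟩⟩
  rcases Sym2.eq_iff.mp heq with ⟨h1, h2⟩ | ⟨h1, h2⟩
  · rcases hnot with hx | hy
    · exact hx (h1 ▸ a.2)
    · exact hy (h2 ▸ b.2)
  · rcases hnot with hx | hy
    · exact hx (h2 ▸ b.2)
    · exact hy (h1 ▸ a.2)

private lemma edgeBoundary_deleteEdges (G : SimpleGraph V) {S : Set V} {x y : V}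
    (hx : x ∈ S) (hy : y ∉ S) :
    edgeBoundary (G.deleteEdges {s(x, y)}) S = edgeBoundary G S \ {(x, y)} := by
  ext ⟨a, b⟩
  simp only [edgeBoundary, Set.mem_setOf_eq, deleteEdges_adj, Set.mem_singleton_iff,
    Set.mem_diff]
  constructor
  · rintro ⟨⟨hadj, hne⟩, ha, hb⟩
    refine ⟨⟨hadj, ha, hb⟩, fun heq => hne ?_⟩
    injection heq with h1 h2
    rw [h1, h2]
  · rintro ⟨⟨hadj, ha, hb⟩, hne⟩
    refine ⟨⟨hadj, fun heq => ?_⟩, ha, hb⟩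
    rcases Sym2.eq_iff.mp heq with ⟨h1, h2⟩ | ⟨h1, h2⟩
    · exact hne (Prod.ext_iff.mpr ⟨h1, h2⟩)
    · exact hb (by rw [h2]; exact hx)

/-- The family of "anchored cuts": sets containing `c`, avoiding `d`, with connected
sides and edge boundary of size at most `k`. -/
private def anch (G : SimpleGraph V) (c d : V) (k : ℕ) : Set (Set V) :=
  {S : Set V | c ∈ S ∧ d ∉ S ∧ (G.induce S).Connected ∧ (G.induce Sᶜ).Connected ∧
    (edgeBoundary G S).Finite ∧ (edgeBoundary G S).ncard ≤ k}

private lemma anch_finite (c d : V) :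
    ∀ (k : ℕ) (G : SimpleGraph V), (anch G c d k).Finite := by
  intro k
  induction k with
  | zero =>
    intro G
    have key : ∀ S T : Set V, S ∈ anch G c d 0 → T ∈ anch G c d 0 → S ⊆ T := by
      rintro S T ⟨hcS, hdS, _, _, hSfin, hScard⟩ ⟨hcT, hdT, _, hTcc, _, _⟩ u hu
      by_contra hu'
      have hreach : G.Reachable u d := reach_of_induce G hTcc hu' hdT
      obtain ⟨W⟩ := hreach
      obtain ⟨Dt, _, hfst, hsnd⟩ := W.exists_boundary_dart S hu hdS
      have : (Dt.fst, Dt.snd) ∈ edgeBoundary G S := ⟨Dt.adj, hfst, hsnd⟩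
      rw [(Set.ncard_eq_zero hSfin).mp (Nat.le_zero.mp hScard)] at this
      exact this
    exact Set.Subsingleton.finite fun S hS T hT =>
      subset_antisymm (key S T hS hT) (key T S hT hS)
  | succ k ih =>
    intro G
    by_cases hr : G.Reachable c d
    · obtain ⟨W⟩ := hr
      have hsub : anch G c d (k + 1) ⊆
          anch G c d k ∪ ⋃ D ∈ {D : G.Dart | D ∈ W.darts},
            anch (G.deleteEdges {s(D.fst, D.snd)}) c d k := by
        rintro S ⟨hcS, hdS, hSc, hScc, hfin, hcard⟩
        by_cases hk : (edgeBoundary G S).ncard ≤ k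
        · exact Or.inl ⟨hcS, hdS, hSc, hScc, hfin, hk⟩
        · right
          obtain ⟨Dt, hDt, hfst, hsnd⟩ := W.exists_boundary_dart S hcS hdS
          have hxy : (Dt.fst, Dt.snd) ∈ edgeBoundary G S := ⟨Dt.adj, hfst, hsnd⟩
          refine Set.mem_biUnion hDt ?_
          refine ⟨hcS, hdS, ?_, ?_, ?_, ?_⟩
          · rw [induce_deleteEdges_eq G (Or.inr hsnd)]; exact hSc
          · rw [induce_deleteEdges_eq G (Or.inl (Set.notMem_compl_iff.mpr hfst))]; exact hScc
          · rw [edgeBoundary_deleteEdges G hfst hsnd]; exact hfin.diff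
          · rw [edgeBoundary_deleteEdges G hfst hsnd,
              Set.ncard_diff_singleton_of_mem hxy]
            omega
      refine Set.Finite.subset (Set.Finite.union (ih G) ?_) hsub
      exact Set.Finite.biUnion W.darts.finite_toSet fun D _ => ih _
    · have hsub : anch G c d (k + 1) ⊆ anch G c d k := by
        rintro S ⟨hcS, hdS, hSc, hScc, hfin, hcard⟩
        refine ⟨hcS, hdS, hSc, hScc, hfin, ?_⟩
        by_contra hk
        have hne : (edgeBoundary G S).Nonempty :=
          Set.nonempty_of_ncard_ne_zero (by omega)
        obtain ⟨⟨x, y⟩, hadj, hxS, hyS⟩ := hne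
        exact hr (((reach_of_induce G hSc hcS hxS).trans hadj.reachable).trans
          (reach_of_induce G hScc hyS hdS))
      exact Set.Finite.subset (ih G) hsub
  
end AuxFiniteness

open CFGroups in
/-- In a connected, locally finite, accessible graph (with accessibility
constant `k` fixed), for optimal cuts `C, D` the set `{E ∈ C_opt : C ⊆ E ⊆ D}` is finite. -/
theorem finitely_many_optimal_cuts_between
    {V : Type u} (G : SimpleGraph V) (hconn : G.Connected)
    (hlf : CFGroups.LocallyFiniteGraph G)
    (k : ℕ) (hacc : CFGroups.AccessibleWith G k)
    (C D : Set V) (hC : C ∈ CFGroups.COpt G k) (hD : D ∈ CFGroups.COpt G k) :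
    {E : Set V | E ∈ CFGroups.COpt G k ∧ C ⊆ E ∧ E ⊆ D}.Finite := by
  obtain ⟨αC, hαC, hCopt⟩ := hC
  have hCcut : IsCut G C := hCopt.1.1.1
  obtain ⟨c, hcC⟩ := hCcut.1
  obtain ⟨αD, hαD, hDopt⟩ := hD
  have hDcut : IsCut G D := hDopt.1.1.1
  obtain ⟨d, hdD⟩ := hDcut.2.1
  refine Set.Finite.subset (anch_finite c d k G) ?_
  rintro E ⟨⟨αE, hαE, hEopt⟩, hCE, hED⟩
  have hEmin := hEopt.1
  have hEsplit : E ∈ cutsSplitting G αE := hEmin.1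
  obtain ⟨hEne, hEcne, hEconn, hEcconn, hEbfin⟩ := hEsplit.1
  obtain ⟨C₀, hC₀s, hC₀w⟩ := hacc αE hαE ⟨E, hEsplit⟩
  have hw : weight G E ≤ k := le_trans (hEmin.2 C₀ hC₀s) hC₀w
  exact ⟨hCE hcC, fun hdE => hdD (hED hdE), hEconn, hEcconn, hEbfin, hw⟩
end

section
/- Let Γ be a connected, locally finite, accessible graph. Then the relation ∼ on C_opt, defined by C ∼ D iff C = D or (C* ⊊ D and every E ∈ C_opt with C* ⊊ E ⊆ D equals D), is an equivalence relation. -/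
open Pointwise

universe u

section Aux

open CFGroups

variable {V : Type u} {G : SimpleGraph V} {k : ℕ} {C D : Set V}

lemma edgeBoundary_compl (G : SimpleGraph V) (C : Set V) :
    edgeBoundary G Cᶜ = Prod.swap '' edgeBoundary G C := by
  ext ⟨u, v⟩
  simp only [edgeBoundary, Set.mem_setOf_eq, Set.image_swap_eq_preimage_swap,
    Set.mem_preimage, Prod.swap_prod_mk, Set.mem_compl_iff, not_not]
  constructor
  · rintro ⟨h, hu, hv⟩; exact ⟨h.symm, hv, hu⟩
  · rintro ⟨h, hv, hu⟩; exact ⟨h.symm, hu, hv⟩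

lemma weight_compl (G : SimpleGraph V) (C : Set V) : weight G Cᶜ = weight G C := by
  rw [weight, weight, edgeBoundary_compl,
    Set.ncard_image_of_injective _ Prod.swap_injective]

lemma isCut_compl (h : IsCut G C) : IsCut G Cᶜ := by
  obtain ⟨h1, h2, h3, h4, h5⟩ := h
  refine ⟨h2, ?_, h4, ?_, ?_⟩
  · rw [compl_compl]; exact h1
  · rw [compl_compl]; exact h3
  · rw [edgeBoundary_compl]; exact h5.image _

lemma nested_compl_left : Nested Cᶜ D ↔ Nested C D := by
  unfold Nested; rw [compl_compl]; tauto

lemma mdeg_compl (G : SimpleGraph V) (k : ℕ) (C : Set V) : mdeg G k Cᶜ = mdeg G k C := by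
  unfold mdeg
  congr 1
  ext D
  simp [nested_compl_left]

lemma cutsSplitting_compl {α : ℤ → V} (h : C ∈ cutsSplitting G α) :
    Cᶜ ∈ cutsSplitting G α := by
  obtain ⟨h1, h2, h3⟩ := h
  refine ⟨isCut_compl h1, h3, ?_⟩
  rw [compl_compl]; exact h2

lemma cutsMin_compl {α : ℤ → V} (h : C ∈ cutsMin G α) : Cᶜ ∈ cutsMin G α := by
  obtain ⟨h1, h2⟩ := h
  refine ⟨cutsSplitting_compl h1, fun D hD => ?_⟩
  rw [weight_compl]; exact h2 D hD

lemma cutsOpt_compl {α : ℤ → V} (h : C ∈ cutsOpt G k α) : Cᶜ ∈ cutsOpt G k α := by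
  obtain ⟨h1, h2⟩ := h
  refine ⟨cutsMin_compl h1, fun D hD => ?_⟩
  rw [mdeg_compl]; exact h2 D hD

lemma COpt_compl (h : C ∈ COpt G k) : Cᶜ ∈ COpt G k := by
  obtain ⟨α, hα, hC⟩ := h
  exact ⟨α, hα, cutsOpt_compl hC⟩

lemma isCut_of_mem_COpt (h : C ∈ COpt G k) : IsCut G C := by
  obtain ⟨α, hα, hC⟩ := h
  exact hC.1.1.1

/-! ### Walk crossing helpers -/

lemma walk_cross' {u v : V} (w : G.Walk u v) (P : Set V) (hu : u ∈ P) (hv : v ∉ P) :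
    ∃ p q : V, G.Adj p q ∧ p ∈ P ∧ q ∉ P := by
  induction w with
  | nil => exact absurd hu hv
  | @cons a b c hadj w ih =>
    by_cases hb : b ∈ P
    · exact ih hb hv
    · exact ⟨a, b, hadj, hu, hb⟩

lemma walk_cross_induce {T : Set V} {u v : ↥T} (w : (G.induce T).Walk u v) (P : Set V)
    (hu : u.1 ∈ P) (hv : v.1 ∉ P) :
    ∃ p q : V, p ∈ T ∧ q ∈ T ∧ G.Adj p q ∧ p ∈ P ∧ q ∉ P := by
  induction w with
  | nil => exact absurd hu hv
  | @cons a b c hadj w ih =>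
    by_cases hb : b.1 ∈ P
    · exact ih hb hv
    · exact ⟨a.1, b.1, a.2, b.2, hadj, hu, hb⟩

lemma reachable_in_induce {T : Set V} (hT : (G.induce T).Connected) {u v : V}
    (hu : u ∈ T) (hv : v ∈ T) : (G.induce T).Reachable ⟨u, hu⟩ ⟨v, hv⟩ :=
  hT.preconnected _ _

/-! ### The determination lemma: a cut is determined by its trace on a superset of the
boundary vertices of a reference set. -/

lemma cut_determined {E S B : Set V} {x y : V} (hEconn : (G.induce E).Connected)
    (hEcconn : (G.induce Eᶜ).Connected)
    (hx : x ∈ E) (hxS : x ∈ S) (hy : y ∉ E) (hyS : y ∉ S)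
    (hB : ∀ p q : V, G.Adj p q → p ∈ S → q ∉ S → p ∈ B ∧ q ∈ B)
    (hagree : ∀ v ∈ B, (v ∈ E ↔ v ∈ S)) : E = S := by
  have h1 : E ⊆ S := by
    intro v hvE
    by_contra hvS
    obtain ⟨wlk⟩ := reachable_in_induce hEconn hx hvE
    obtain ⟨p, q, hpE, hqE, hadj, hpS, hqS⟩ := walk_cross_induce wlk S hxS hvS
    exact hqS ((hagree q (hB p q hadj hpS hqS).2).mp hqE)
  refine Set.Subset.antisymm h1 ?_
  intro v hvS
  by_contra hvE
  obtain ⟨wlk⟩ := reachable_in_induce hEcconn (show y ∈ Eᶜ from hy) (show v ∈ Eᶜ from hvE)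
  obtain ⟨p, q, hpE, hqE, hadj, hpS, hqS⟩ := walk_cross_induce wlk Sᶜ hyS (not_not.mpr hvS)
  have := hB q p hadj.symm (not_not.mp hqS) hpS
  exact hqE ((hagree q this.1).mpr (not_not.mp hqS))

/-! ### Finiteness of the family of `k`-cuts separating two vertices -/

lemma sep_finite (G : SimpleGraph V) (k : ℕ) (x y : V) :
    {E : Set V | IsCutLe G k E ∧ x ∈ E ∧ y ∉ E}.Finite := by
  set 𝒮 := {E : Set V | IsCutLe G k E ∧ x ∈ E ∧ y ∉ E} with h𝒮
  by_contra hinf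
  have : Infinite ↥𝒮 := Set.Infinite.to_subtype hinf
  set U : Ultrafilter ↥𝒮 := Filter.hyperfilter ↥𝒮 with hU
  set Einf : Set V := {v : V | {F : ↥𝒮 | v ∈ F.1} ∈ U} with hEinf
  -- agreement sets belong to the ultrafilter
  have hagreeU : ∀ B : Set V, B.Finite → {F : ↥𝒮 | ∀ v ∈ B, (v ∈ F.1 ↔ v ∈ Einf)} ∈ U := by
    intro B hB
    have : {F : ↥𝒮 | ∀ v ∈ B, (v ∈ F.1 ↔ v ∈ Einf)} = ⋂ v ∈ B, {F : ↥𝒮 | v ∈ F.1 ↔ v ∈ Einf} := by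
      ext F; simp
    rw [this]
    refine (Filter.biInter_mem hB).mpr ?_
    intro v _
    by_cases hv : v ∈ Einf
    · have : {F : ↥𝒮 | v ∈ F.1 ↔ v ∈ Einf} = {F : ↥𝒮 | v ∈ F.1} := by
        ext F; simp [hv]
      rw [this]; exact hv
    · have : {F : ↥𝒮 | v ∈ F.1 ↔ v ∈ Einf} = {F : ↥𝒮 | v ∈ F.1}ᶜ := by
        ext F; simp [hv]
      rw [this]
      exact Ultrafilter.compl_mem_iff_notMem.mpr hv
  -- the boundary of Einf is small
  have hbdd : ∀ T : Set (V × V), T ⊆ edgeBoundary G Einf → T.Finite → T.ncard ≤ k := by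
    intro T hT hTfin
    set B : Set V := (Prod.fst '' T) ∪ (Prod.snd '' T) with hBdef
    have hBfin : B.Finite := (hTfin.image _).union (hTfin.image _)
    obtain ⟨F, hF⟩ := Ultrafilter.nonempty_of_mem (hagreeU B hBfin)
    have hsub : T ⊆ edgeBoundary G F.1 := by
      rintro ⟨p, q⟩ hpq
      obtain ⟨hadj, hp, hq⟩ := hT hpq
      refine ⟨hadj, ?_, ?_⟩
      · exact (hF p (Or.inl ⟨(p,q), hpq, rfl⟩)).mpr hp
      · intro hcon
        exact hq ((hF q (Or.inr ⟨(p,q), hpq, rfl⟩)).mp hcon)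
    calc T.ncard ≤ (edgeBoundary G F.1).ncard := Set.ncard_le_ncard hsub F.2.1.1.2.2.2.2
    _ ≤ k := F.2.1.2
  have hfininf : (edgeBoundary G Einf).Finite := by
    by_contra hcon
    obtain ⟨T, hTsub, hTfin, hTcard⟩ := Set.Infinite.exists_subset_ncard_eq hcon (k+1)
    have := hbdd T hTsub hTfin
    omega
  -- now all ultrafilter-many F agreeing on B* are equal to Einf
  set B' : Set V := (Prod.fst '' edgeBoundary G Einf) ∪ (Prod.snd '' edgeBoundary G Einf)
      ∪ {x, y} with hB'
  have hB'fin : B'.Finite := ((hfininf.image _).union (hfininf.image _)).union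
    ((Set.finite_singleton y).insert x)
  have hxmem : x ∈ Einf := by
    have : {F : ↥𝒮 | x ∈ F.1} = Set.univ := by
      ext F; simp [F.2.2.1]
    simp only [hEinf, Set.mem_setOf_eq, this]
    exact Filter.univ_mem
  have hymem : y ∉ Einf := by
    intro hcon
    obtain ⟨F, hF⟩ := Ultrafilter.nonempty_of_mem hcon
    exact F.2.2.2 hF
  have hsingle : {F : ↥𝒮 | ∀ v ∈ B', (v ∈ F.1 ↔ v ∈ Einf)} ⊆ {F : ↥𝒮 | F.1 = Einf} := by
    intro F hF
    refine cut_determined F.2.1.1.2.2.1 F.2.1.1.2.2.2.1 F.2.2.1 hxmem F.2.2.2 hymem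
      (fun p q hadj hp hq => ⟨Or.inl (Or.inl ⟨(p,q), ⟨hadj, hp, hq⟩, rfl⟩),
        Or.inl (Or.inr ⟨(p,q), ⟨hadj, hp, hq⟩, rfl⟩)⟩) hF
  have hsmall : {F : ↥𝒮 | F.1 = Einf}.Finite := by
    apply Set.Subsingleton.finite
    intro F hF F' hF'
    exact Subtype.ext (hF.trans hF'.symm)
  have hfinal : {F : ↥𝒮 | F.1 = Einf} ∈ U := U.1.sets_of_superset (hagreeU B' hB'fin) hsingle
  rw [hU] at hfinal
  exact Set.Finite.notMem_hyperfilter hsmall hfinal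

lemma nested_comm {C D : Set V} (h : Nested C D) : Nested D C := by
  rcases h with h | h | h | h
  · exact Or.inr (Or.inr (Or.inr (Set.compl_subset_compl.mpr h)))
  · exact Or.inr (Or.inl (Set.subset_compl_comm.mp h))
  · exact Or.inr (Or.inr (Or.inl (Set.compl_subset_comm.mp h)))
  · exact Or.inl (Set.compl_subset_compl.mp h)

lemma notNested_corners {C D : Set V} (h : ¬ Nested C D) :
    (C ∩ D).Nonempty ∧ (C ∩ Dᶜ).Nonempty ∧ (Cᶜ ∩ D).Nonempty ∧ (Cᶜ ∩ Dᶜ).Nonempty := by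
  unfold Nested at h
  push_neg at h
  obtain ⟨h1, h2, h3, h4⟩ := h
  obtain ⟨a, ha, ha'⟩ := Set.not_subset.mp h2
  obtain ⟨b, hb, hb'⟩ := Set.not_subset.mp h1
  obtain ⟨c, hc, hc'⟩ := Set.not_subset.mp h4
  obtain ⟨d, hd, hd'⟩ := Set.not_subset.mp h3
  exact ⟨⟨a, ha, not_not.mp ha'⟩, ⟨b, hb, hb'⟩, ⟨c, hc, not_not.mp hc'⟩, ⟨d, hd, hd'⟩⟩

/-- `m(C)` counts a finite set: there are only finitely many `k`-cuts not nested with a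
given cut. -/
lemma badSet_finite (G : SimpleGraph V) (k : ℕ) {C : Set V} (hC : (edgeBoundary G C).Finite) :
    {E : Set V | IsCutLe G k E ∧ ¬ Nested C E}.Finite := by
  classical
  set W : Set V := (Prod.fst '' edgeBoundary G C) ∪ (Prod.snd '' edgeBoundary G C) with hW
  have hWfin : W.Finite := (hC.image _).union (hC.image _)
  have hsub : {E : Set V | IsCutLe G k E ∧ ¬ Nested C E} ⊆
      ⋃ u ∈ W, ⋃ v ∈ W, {E : Set V | IsCutLe G k E ∧ u ∈ E ∧ v ∉ E} := by
    intro E ⟨hE, hnn⟩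
    obtain ⟨⟨b, hbC, hbE⟩, ⟨a, haC, haE⟩, ⟨d, hdC, hdE⟩, ⟨c, hcC, hcE⟩⟩ := notNested_corners hnn
    -- a walk inside E from b (∈ C) to d (∈ Cᶜ) crosses δC
    obtain ⟨wlk⟩ := reachable_in_induce hE.1.2.2.1 hbE hdE
    obtain ⟨p, q, hpE, hqE, hadj, hpC, hqC⟩ := walk_cross_induce wlk C hbC hdC
    -- a walk inside Eᶜ from a (∈ C) to c (∈ Cᶜ) crosses δC
    obtain ⟨wlk'⟩ := reachable_in_induce hE.1.2.2.2.1 haE hcE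
    obtain ⟨p', q', hpE', hqE', hadj', hpC', hqC'⟩ := walk_cross_induce wlk' C haC hcC
    have hpW : p ∈ W := Or.inl ⟨(p, q), ⟨hadj, hpC, hqC⟩, rfl⟩
    have hpW' : p' ∈ W := Or.inl ⟨(p', q'), ⟨hadj', hpC', hqC'⟩, rfl⟩
    exact Set.mem_biUnion hpW (Set.mem_biUnion hpW' ⟨hE, hpE, hpE'⟩)
  exact Set.Finite.subset (hWfin.biUnion (fun u _ => hWfin.biUnion (fun v _ =>
    sep_finite G k u v))) hsub

lemma edgeBoundary_inter_union_subset (G : SimpleGraph V) (C D : Set V) :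
    edgeBoundary G (C ∩ D) ∪ edgeBoundary G (C ∪ D) ⊆
      edgeBoundary G C ∪ edgeBoundary G D := by
  rintro ⟨u, v⟩ (⟨hadj, hu, hv⟩ | ⟨hadj, hu, hv⟩)
  · by_cases hvC : v ∈ C
    · exact Or.inr ⟨hadj, hu.2, fun hvD => hv ⟨hvC, hvD⟩⟩
    · exact Or.inl ⟨hadj, hu.1, hvC⟩
  · rcases hu with huC | huD
    · exact Or.inl ⟨hadj, huC, fun hvC => hv (Or.inl hvC)⟩
    · exact Or.inr ⟨hadj, huD, fun hvD => hv (Or.inr hvD)⟩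

lemma edgeBoundary_inter_inter_subset (G : SimpleGraph V) (C D : Set V) :
    edgeBoundary G (C ∩ D) ∩ edgeBoundary G (C ∪ D) ⊆
      edgeBoundary G C ∩ edgeBoundary G D := by
  rintro ⟨u, v⟩ ⟨⟨hadj, hu, _⟩, ⟨_, _, hv⟩⟩
  exact ⟨⟨hadj, hu.1, fun hvC => hv (Or.inl hvC)⟩, ⟨hadj, hu.2, fun hvD => hv (Or.inr hvD)⟩⟩

lemma weight_submod {C D : Set V} (hC : (edgeBoundary G C).Finite)
    (hD : (edgeBoundary G D).Finite) :
    weight G (C ∩ D) + weight G (Cᶜ ∩ Dᶜ) ≤ weight G C + weight G D := by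
  have h4 : Cᶜ ∩ Dᶜ = (C ∪ D)ᶜ := (Set.compl_union C D).symm
  rw [h4, weight_compl]
  set A := edgeBoundary G (C ∩ D)
  set B := edgeBoundary G (C ∪ D)
  set X := edgeBoundary G C
  set Y := edgeBoundary G D
  have hXY : (X ∪ Y).Finite := hC.union hD
  have hU : A ∪ B ⊆ X ∪ Y := edgeBoundary_inter_union_subset G C D
  have hI : A ∩ B ⊆ X ∩ Y := edgeBoundary_inter_inter_subset G C D
  have hA : A.Finite := hXY.subset (fun p hp => hU (Or.inl hp))
  have hB : B.Finite := hXY.subset (fun p hp => hU (Or.inr hp))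
  calc A.ncard + B.ncard = (A ∪ B).ncard + (A ∩ B).ncard :=
        (Set.ncard_union_add_ncard_inter A B hA hB).symm
    _ ≤ (X ∪ Y).ncard + (X ∩ Y).ncard :=
        Nat.add_le_add (Set.ncard_le_ncard hU hXY) (Set.ncard_le_ncard hI (hC.inter_of_left _))
    _ = X.ncard + Y.ncard := Set.ncard_union_add_ncard_inter X Y hC hD

lemma compl_inter_compl_subset {C D E : Set V} (h1 : C ⊆ E) (h2 : D ⊆ E) :
    (Cᶜ ∩ Dᶜ)ᶜ ⊆ E := by
  intro x hx
  by_cases hC : x ∈ C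
  · exact h1 hC
  · by_cases hD : x ∈ D
    · exact h2 hD
    · exact absurd ⟨hC, hD⟩ hx

lemma compl_inter_subset {C D E : Set V} (h1 : Cᶜ ⊆ E) (h2 : Dᶜ ⊆ E) :
    (C ∩ D)ᶜ ⊆ E := by
  intro x hx
  by_cases hC : x ∈ C
  · refine h2 (fun hD => hx ⟨hC, hD⟩)
  · exact h1 hC

lemma nested_corner_of_left {C D E : Set V} (h : Nested C E) :
    Nested (C ∩ D) E ∨ Nested (Cᶜ ∩ Dᶜ) E := by
  rcases h with h | h | h | h
  · exact Or.inl (Or.inl (Set.inter_subset_left.trans h))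
  · exact Or.inl (Or.inr (Or.inl (Set.inter_subset_left.trans h)))
  · exact Or.inr (Or.inl (Set.inter_subset_left.trans h))
  · exact Or.inr (Or.inr (Or.inl (Set.inter_subset_left.trans h)))

lemma nested_corner_of_right {C D E : Set V} (h : Nested D E) :
    Nested (C ∩ D) E ∨ Nested (Cᶜ ∩ Dᶜ) E := by
  rcases h with h | h | h | h
  · exact Or.inl (Or.inl (Set.inter_subset_right.trans h))
  · exact Or.inl (Or.inr (Or.inl (Set.inter_subset_right.trans h)))
  · exact Or.inr (Or.inl (Set.inter_subset_right.trans h))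
  · exact Or.inr (Or.inr (Or.inl (Set.inter_subset_right.trans h)))

lemma nested_both_corners {C D E : Set V} (hcross : ¬ Nested C D)
    (hCE : Nested C E) (hDE : Nested D E) :
    Nested (C ∩ D) E ∧ Nested (Cᶜ ∩ Dᶜ) E := by
  obtain ⟨n1, n2, n3, n4⟩ := notNested_corners hcross
  rcases hCE with h | h | h | h <;> rcases hDE with h' | h' | h' | h'
  -- C ⊆ E cases
  · exact ⟨Or.inl (Set.inter_subset_left.trans h),
      Or.inr (Or.inr (Or.inl (compl_inter_compl_subset h h')))⟩
  · obtain ⟨x, hx1, hx2⟩ := n1; exact absurd (h hx1) (h' hx2)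
  · exact ⟨Or.inl (Set.inter_subset_left.trans h),
      Or.inl (Set.inter_subset_right.trans h')⟩
  · exact ⟨Or.inl (Set.inter_subset_left.trans h),
      Or.inr (Or.inl (Set.inter_subset_right.trans h'))⟩
  -- C ⊆ Eᶜ cases
  · obtain ⟨x, hx1, hx2⟩ := n1; exact absurd (h' hx2) (h hx1)
  · exact ⟨Or.inr (Or.inl (Set.inter_subset_left.trans h)),
      Or.inr (Or.inr (Or.inr (compl_inter_compl_subset h h')))⟩
  · exact ⟨Or.inr (Or.inl (Set.inter_subset_left.trans h)),
      Or.inl (Set.inter_subset_right.trans h')⟩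
  · exact ⟨Or.inr (Or.inl (Set.inter_subset_left.trans h)),
      Or.inr (Or.inl (Set.inter_subset_right.trans h'))⟩
  -- Cᶜ ⊆ E cases
  · exact ⟨Or.inl (Set.inter_subset_right.trans h'),
      Or.inl (Set.inter_subset_left.trans h)⟩
  · exact ⟨Or.inr (Or.inl (Set.inter_subset_right.trans h')),
      Or.inl (Set.inter_subset_left.trans h)⟩
  · exact ⟨Or.inr (Or.inr (Or.inl (compl_inter_subset h h'))),
      Or.inl (Set.inter_subset_left.trans h)⟩
  · obtain ⟨x, hx1, hx2⟩ := n4; exact absurd (h hx1) (h' hx2)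
  -- Cᶜ ⊆ Eᶜ cases
  · obtain ⟨x, hx1, hx2⟩ := n3; exact absurd (h' hx2) (h hx1)
  · exact ⟨Or.inr (Or.inl (Set.inter_subset_right.trans h')),
      Or.inr (Or.inl (Set.inter_subset_left.trans h))⟩
  · obtain ⟨x, hx1, hx2⟩ := n4; exact absurd (Set.compl_subset_compl.mp h (h' hx2)) hx1
  · exact ⟨Or.inr (Or.inr (Or.inr (compl_inter_subset h h'))),
      Or.inr (Or.inl (Set.inter_subset_left.trans h))⟩

lemma count_key {C D : Set V} (hCk : IsCutLe G k C) (hDk : IsCutLe G k D)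
    (hcross : ¬ Nested C D) :
    mdeg G k (C ∩ D) + mdeg G k (Cᶜ ∩ Dᶜ) + 2 ≤ mdeg G k C + mdeg G k D := by
  classical
  set NC := {E : Set V | IsCutLe G k E ∧ ¬ Nested C E} with hNCdef
  set ND := {E : Set V | IsCutLe G k E ∧ ¬ Nested D E} with hNDdef
  set NX := {E : Set V | IsCutLe G k E ∧ ¬ Nested (C ∩ D) E} with hNXdef
  set NY := {E : Set V | IsCutLe G k E ∧ ¬ Nested (Cᶜ ∩ Dᶜ) E} with hNYdef
  have hNC : NC.Finite := badSet_finite G k hCk.1.2.2.2.2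
  have hND : ND.Finite := badSet_finite G k hDk.1.2.2.2.2
  have hCD : C ≠ D := fun h => hcross (Or.inl (h ▸ Set.Subset.refl C))
  have hCin : C ∈ ND := ⟨hCk, fun h => hcross (nested_comm h)⟩
  have hDin : D ∈ NC := ⟨hDk, hcross⟩
  have hpair : {C, D} ⊆ NC ∪ ND := by
    rintro E (rfl | rfl)
    · exact Or.inr hCin
    · exact Or.inl hDin
  have hAX : NX ∪ NY ⊆ (NC ∪ ND) \ {C, D} := by
    rintro E hE
    have hEk : IsCutLe G k E := by rcases hE with h | h <;> exact h.1
    constructor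
    · by_contra hcon
      rw [Set.mem_union] at hcon
      push_neg at hcon
      have h1 : Nested C E := by
        by_contra hn; exact hcon.1 ⟨hEk, hn⟩
      have h2 : Nested D E := by
        by_contra hn; exact hcon.2 ⟨hEk, hn⟩
      obtain ⟨hX, hY⟩ := nested_both_corners hcross h1 h2
      rcases hE with h | h
      · exact h.2 hX
      · exact h.2 hY
    · rintro (rfl | rfl)
      · rcases hE with h | h
        · exact h.2 (Or.inl Set.inter_subset_left)
        · exact h.2 (Or.inr (Or.inl Set.inter_subset_left))
      · rcases hE with h | h
        · exact h.2 (Or.inl Set.inter_subset_right)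
        · exact h.2 (Or.inr (Or.inl Set.inter_subset_right))
  have hBY : NX ∩ NY ⊆ NC ∩ ND := by
    rintro E ⟨⟨hEk, hX⟩, ⟨_, hY⟩⟩
    refine ⟨⟨hEk, fun h => ?_⟩, ⟨hEk, fun h => ?_⟩⟩
    · rcases nested_corner_of_left (D := D) h with h' | h'
      · exact hX h'
      · exact hY h'
    · rcases nested_corner_of_right (C := C) h with h' | h'
      · exact hX h'
      · exact hY h'
  have hUfin : (NC ∪ ND).Finite := hNC.union hND
  have hXfin : NX.Finite := hUfin.subset (fun E hE => (hAX (Or.inl hE)).1)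
  have hYfin : NY.Finite := hUfin.subset (fun E hE => (hAX (Or.inr hE)).1)
  have e1 : (NX ∪ NY).ncard + (NX ∩ NY).ncard = NX.ncard + NY.ncard :=
    Set.ncard_union_add_ncard_inter NX NY hXfin hYfin
  have e2 : (NX ∪ NY).ncard ≤ ((NC ∪ ND) \ {C, D}).ncard :=
    Set.ncard_le_ncard hAX hUfin.diff
  have e3 : ((NC ∪ ND) \ {C, D}).ncard = (NC ∪ ND).ncard - 2 := by
    rw [Set.ncard_diff hpair ((Set.finite_singleton D).insert C), Set.ncard_pair hCD]
  have e4 : (NX ∩ NY).ncard ≤ (NC ∩ ND).ncard :=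
    Set.ncard_le_ncard hBY (hNC.inter_of_left _)
  have e5 : (NC ∪ ND).ncard + (NC ∩ ND).ncard = NC.ncard + ND.ncard :=
    Set.ncard_union_add_ncard_inter NC ND hNC hND
  have e6 : 2 ≤ (NC ∪ ND).ncard := by
    rw [← Set.ncard_pair hCD]
    exact Set.ncard_le_ncard hpair hUfin
  have g1 : mdeg G k (C ∩ D) = NX.ncard := rfl
  have g2 : mdeg G k (Cᶜ ∩ Dᶜ) = NY.ncard := rfl
  have g3 : mdeg G k C = NC.ncard := rfl
  have g4 : mdeg G k D = ND.ncard := rfl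
  omega

lemma reachable_induce_mono {T U : Set V} (hTU : T ⊆ U) {a b : V} (ha : a ∈ T) (hb : b ∈ T)
    (h : (G.induce T).Reachable ⟨a, ha⟩ ⟨b, hb⟩) :
    (G.induce U).Reachable ⟨a, hTU ha⟩ ⟨b, hTU hb⟩ := by
  let f : G.induce T →g G.induce U :=
    ⟨fun x => ⟨x.1, hTU x.2⟩, fun {x y} hxy => hxy⟩
  exact h.map f

lemma corner_key (hconn : G.Connected) {α : ℤ → V} {C' S : Set V}
    (hC' : C' ∈ cutsMin G α) (hSfin : (edgeBoundary G S).Finite)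
    (hScconn : (G.induce Sᶜ).Connected)
    (h1 : (Set.range α ∩ S).Infinite) (h2 : (Set.range α ∩ Sᶜ).Infinite) :
    weight G C' ≤ weight G S ∧ (weight G S ≤ weight G C' → S ∈ cutsMin G α) := by
  classical
  obtain ⟨s0, -, hs0⟩ := h2.nonempty
  have hScne : Sᶜ.Nonempty := ⟨s0, hs0⟩
  set KK : (G.induce S).ConnectedComponent → Set V :=
    fun c => {v : V | ∃ h : v ∈ S, (G.induce S).connectedComponentMk ⟨v, h⟩ = c} with hKKdef
  have hKsub : ∀ c, KK c ⊆ S := fun c v hv => hv.1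
  have hKadj : ∀ c (v w : V), v ∈ KK c → w ∈ S → G.Adj v w → w ∈ KK c := by
    rintro c v w ⟨hv, hc⟩ hw hadj
    refine ⟨hw, ?_⟩
    rw [← hc]
    exact SimpleGraph.ConnectedComponent.sound
      (SimpleGraph.Adj.reachable (show (G.induce S).Adj ⟨w, hw⟩ ⟨v, hv⟩ from hadj.symm))
  have hKBsub : ∀ c, edgeBoundary G (KK c) ⊆ edgeBoundary G S := by
    rintro c ⟨u, v⟩ ⟨hadj, hu, hv⟩
    exact ⟨hadj, hKsub c hu, fun hvS => hv (hKadj c u v hu hvS hadj)⟩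
  have hKne : ∀ c, (KK c).Nonempty := by
    intro c
    obtain ⟨⟨v, hv⟩, hrep⟩ := c.exists_rep
    exact ⟨v, hv, hrep⟩
  have hKbne : ∀ c, (edgeBoundary G (KK c)).Nonempty := by
    intro c
    obtain ⟨v, hv⟩ := hKne c
    obtain ⟨wlk⟩ := hconn.preconnected v s0
    obtain ⟨p, q, hadj, hp, hq⟩ := walk_cross' wlk (KK c) hv (fun hcon => hs0 (hKsub c hcon))
    exact ⟨(p, q), hadj, hp, hq⟩
  have hwalkK : ∀ c (p q : ↥S) (w : (G.induce S).Walk p q) (hp : p.1 ∈ KK c),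
      ∃ hq : q.1 ∈ KK c, (G.induce (KK c)).Reachable ⟨p.1, hp⟩ ⟨q.1, hq⟩ := by
    intro c p q w
    induction w with
    | nil => exact fun hp => ⟨hp, SimpleGraph.Reachable.refl _⟩
    | @cons a b q' hadj w ih =>
      intro hp
      have hb : b.1 ∈ KK c := hKadj c a.1 b.1 hp b.2 hadj
      obtain ⟨hq, hr⟩ := ih hb
      exact ⟨hq, SimpleGraph.Reachable.trans
        (SimpleGraph.Adj.reachable (show (G.induce (KK c)).Adj ⟨a.1, hp⟩ ⟨b.1, hb⟩ from hadj)) hr⟩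
  have hKconn : ∀ c, (G.induce (KK c)).Connected := by
    intro c
    have : Nonempty ↥(KK c) := (hKne c).to_subtype
    constructor
    rintro ⟨u, hu⟩ ⟨v, hv⟩
    obtain ⟨huS, hcu⟩ := hu
    obtain ⟨hvS, hcv⟩ := hv
    obtain ⟨wlk⟩ := SimpleGraph.ConnectedComponent.exact (hcu.trans hcv.symm)
    obtain ⟨hq, hr⟩ := hwalkK c ⟨u, huS⟩ ⟨v, hvS⟩ wlk ⟨huS, hcu⟩
    exact hr
  have hdisj : ∀ c c' : (G.induce S).ConnectedComponent, c ≠ c' → ∀ v, v ∈ KK c → v ∉ KK c' := by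
    rintro c c' hne v ⟨hvS, hvc⟩ ⟨hvS', hvc'⟩
    exact hne (hvc ▸ hvc' ▸ rfl)
  have hKcconn : ∀ c, (G.induce (KK c)ᶜ).Connected := by
    intro c
    have hcsub : Sᶜ ⊆ (KK c)ᶜ := Set.compl_subset_compl.mpr (hKsub c)
    have hs0' : s0 ∈ (KK c)ᶜ := hcsub hs0
    have hreach : ∀ x (hx : x ∈ (KK c)ᶜ),
        (G.induce (KK c)ᶜ).Reachable ⟨x, hx⟩ ⟨s0, hs0'⟩ := by
      intro x hx
      by_cases hxS : x ∈ S
      · set c' := (G.induce S).connectedComponentMk ⟨x, hxS⟩ with hc'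
        have hxc' : x ∈ KK c' := ⟨hxS, rfl⟩
        have hcc' : c ≠ c' := by
          rintro rfl
          exact hx hxc'
        have hsub' : KK c' ⊆ (KK c)ᶜ := fun v hv => hdisj c' c (Ne.symm hcc') v hv
        obtain ⟨⟨p, q⟩, hadj, hp, hq⟩ := hKbne c'
        have hqS : q ∉ S := fun hqS => hq (hKadj c' p q hp hqS hadj)
        have hr1 : (G.induce (KK c)ᶜ).Reachable ⟨x, hx⟩ ⟨p, hsub' hp⟩ := by
          have := ((hKconn c').preconnected ⟨x, hxc'⟩ ⟨p, hp⟩)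
          exact reachable_induce_mono hsub' hxc' hp this
        have hr2 : (G.induce (KK c)ᶜ).Reachable ⟨p, hsub' hp⟩ ⟨q, hcsub hqS⟩ :=
          SimpleGraph.Adj.reachable
            (show (G.induce (KK c)ᶜ).Adj ⟨p, hsub' hp⟩ ⟨q, hcsub hqS⟩ from hadj)
        have hr3 : (G.induce (KK c)ᶜ).Reachable ⟨q, hcsub hqS⟩ ⟨s0, hs0'⟩ :=
          reachable_induce_mono hcsub hqS hs0 (hScconn.preconnected ⟨q, hqS⟩ ⟨s0, hs0⟩)
        exact (hr1.trans hr2).trans hr3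
      · exact reachable_induce_mono hcsub hxS hs0 (hScconn.preconnected ⟨x, hxS⟩ ⟨s0, hs0⟩)
    have : Nonempty ↥(KK c)ᶜ := ⟨⟨s0, hs0'⟩⟩
    constructor
    rintro ⟨u, hu⟩ ⟨v, hv⟩
    exact (hreach u hu).trans (hreach v hv).symm
  haveI hΓfin : Finite ((G.induce S).ConnectedComponent) := by
    haveI : Finite ↥(edgeBoundary G S) := hSfin.to_subtype
    refine Finite.of_injective
      (fun c => (⟨(hKbne c).some, hKBsub c (hKbne c).some_mem⟩ : ↥(edgeBoundary G S))) ?_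
    intro c₁ c₂ h
    have h1 := (hKbne c₁).some_mem
    have h2 := (hKbne c₂).some_mem
    rw [Subtype.mk_eq_mk] at h
    rw [h] at h1
    by_contra hne
    exact hdisj c₁ c₂ hne _ h1.2.1 h2.2.1
  obtain ⟨c, hKinf⟩ : ∃ c, (Set.range α ∩ KK c).Infinite := by
    by_contra hcon
    push_neg at hcon
    have hsub : Set.range α ∩ S ⊆ ⋃ c, (Set.range α ∩ KK c) := by
      rintro v ⟨hvα, hvS⟩
      exact Set.mem_iUnion.mpr ⟨(G.induce S).connectedComponentMk ⟨v, hvS⟩, hvα, hvS, rfl⟩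
    exact h1 (Set.Finite.subset (Set.finite_iUnion fun c => (hcon c)) hsub)
  have hcompl : Sᶜ ⊆ (KK c)ᶜ := Set.compl_subset_compl.mpr (hKsub c)
  have hKsplit : KK c ∈ cutsSplitting G α := by
    refine ⟨⟨hKne c, hScne.mono hcompl, hKconn c, hKcconn c, hSfin.subset (hKBsub c)⟩,
      hKinf, h2.mono (Set.inter_subset_inter_right _ hcompl)⟩
  have hwK : weight G C' ≤ weight G (KK c) := hC'.2 _ hKsplit
  have hwKS : weight G (KK c) ≤ weight G S := Set.ncard_le_ncard (hKBsub c) hSfin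
  refine ⟨le_trans hwK hwKS, fun hw => ?_⟩
  have hKS : KK c = S := by
    by_contra hne
    obtain ⟨x, hxS, hxK⟩ := Set.exists_of_ssubset (Set.ssubset_iff_subset_ne.mpr ⟨hKsub c, hne⟩)
    set c' := (G.induce S).connectedComponentMk ⟨x, hxS⟩ with hc'
    have hxc' : x ∈ KK c' := ⟨hxS, rfl⟩
    have hcc' : c ≠ c' := by
      rintro rfl
      exact hxK hxc'
    obtain ⟨⟨p, q⟩, hpq⟩ := hKbne c'
    have hpq' : (p, q) ∈ edgeBoundary G S := hKBsub c' hpq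
    have hnotK : (p, q) ∉ edgeBoundary G (KK c) := by
      rintro ⟨_, hpK, _⟩
      exact hdisj c c' hcc' p hpK hpq.2.1
    have hstrict : edgeBoundary G (KK c) ⊂ edgeBoundary G S :=
      ⟨hKBsub c, fun hsup => hnotK (hsup hpq')⟩
    have := Set.ncard_lt_ncard hstrict hSfin
    unfold weight at hw hwK hwKS
    omega
  rw [← hKS]
  exact ⟨hKsplit, fun D hD => le_trans (hKS ▸ hw) (hC'.2 D hD)⟩

private lemma arithA {a b w x : ℕ} (h1 : a ≤ w) (h2 : b ≤ x) (h3 : x + w ≤ a + b) :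
    w ≤ a ∧ x ≤ b := by omega

private lemma arithB {a b w x : ℕ} (h1 : a ≤ w) (h2 : b ≤ x) (h3 : w + x ≤ a + b) :
    w ≤ a ∧ x ≤ b := by omega

private lemma arith4 {a b w x y z : ℕ} (h1 : a ≤ w) (h2 : a ≤ x) (h3 : b ≤ y) (h4 : b ≤ z)
    (h5 : w + x ≤ a + b) (h6 : y + z ≤ a + b) : w ≤ a ∧ x ≤ a ∧ y ≤ b ∧ z ≤ b := by omega

private lemma engA {mC mD mX mY : ℕ} (h1 : mC ≤ mX) (h2 : mD ≤ mY)
    (h3 : mY + mX + 2 ≤ mC + mD) : False := by omega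

private lemma engB {mC mD mX mY : ℕ} (h1 : mC ≤ mX) (h2 : mD ≤ mY)
    (h3 : mX + mY + 2 ≤ mC + mD) : False := by omega

private lemma eng4 {mC mD mP mQ mR mS : ℕ} (h1 : mC ≤ mP) (h2 : mC ≤ mQ) (h3 : mD ≤ mR)
    (h4 : mD ≤ mS) (h5 : mP + mQ + 2 ≤ mC + mD) (h6 : mR + mS + 2 ≤ mC + mD) : False := by
  omega
/-- The key nestedness property of optimal cuts. -/
lemma COpt_nested (hconn : G.Connected) (hlf : LocallyFiniteGraph G)
    (hacc : AccessibleWith G k)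
    (hC : C ∈ COpt G k) (hD : D ∈ COpt G k) : Nested C D := by
  classical
  by_contra hcross
  obtain ⟨α, hα, hCopt⟩ := hC
  obtain ⟨β, hβ, hDopt⟩ := hD
  obtain ⟨n1, n2, n3, n4⟩ := notNested_corners hcross
  have hCmin := hCopt.1
  have hDmin := hDopt.1
  have hCsplit := hCmin.1
  have hDsplit := hDmin.1
  have hCcut : IsCut G C := hCsplit.1
  have hDcut : IsCut G D := hDsplit.1
  have hCk : IsCutLe G k C := by
    refine ⟨hCcut, ?_⟩
    obtain ⟨C₀, hC₀, hC₀k⟩ := hacc α hα ⟨C, hCsplit⟩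
    exact le_trans (hCmin.2 C₀ hC₀) hC₀k
  have hDk : IsCutLe G k D := by
    refine ⟨hDcut, ?_⟩
    obtain ⟨D₀, hD₀, hD₀k⟩ := hacc β hβ ⟨D, hDsplit⟩
    exact le_trans (hDmin.2 D₀ hD₀) hD₀k
  have hfinC : (edgeBoundary G C).Finite := hCcut.2.2.2.2
  have hfinD : (edgeBoundary G D).Finite := hDcut.2.2.2.2
  have hfinCc : (edgeBoundary G Cᶜ).Finite := by
    rw [edgeBoundary_compl]; exact hfinC.image _
  have hfinDc : (edgeBoundary G Dᶜ).Finite := by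
    rw [edgeBoundary_compl]; exact hfinD.image _
  -- boundary finiteness of the four corners
  have hf1 : (edgeBoundary G (C ∩ D)).Finite :=
    (hfinC.union hfinD).subset (fun p hp => edgeBoundary_inter_union_subset G C D (Or.inl hp))
  have hf2 : (edgeBoundary G (C ∩ Dᶜ)).Finite :=
    (hfinC.union hfinDc).subset (fun p hp => edgeBoundary_inter_union_subset G C Dᶜ (Or.inl hp))
  have hf3 : (edgeBoundary G (Cᶜ ∩ D)).Finite :=
    (hfinCc.union hfinD).subset (fun p hp => edgeBoundary_inter_union_subset G Cᶜ D (Or.inl hp))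
  have hf4 : (edgeBoundary G (Cᶜ ∩ Dᶜ)).Finite :=
    (hfinCc.union hfinDc).subset
      (fun p hp => edgeBoundary_inter_union_subset G Cᶜ Dᶜ (Or.inl hp))
  -- connectivity of the corner complements
  have hCconn := hCcut.2.2.1
  have hCcconn := hCcut.2.2.2.1
  have hDconn := hDcut.2.2.1
  have hDcconn := hDcut.2.2.2.1
  have hcc1 : (G.induce (C ∩ D)ᶜ).Connected := by
    rw [Set.compl_inter]
    exact SimpleGraph.induce_union_connected hCcconn.preconnected hDcconn.preconnected n4
  have hcc2 : (G.induce (C ∩ Dᶜ)ᶜ).Connected := by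
    rw [Set.compl_inter, compl_compl]
    exact SimpleGraph.induce_union_connected hCcconn.preconnected hDconn.preconnected n3
  have hcc3 : (G.induce (Cᶜ ∩ D)ᶜ).Connected := by
    rw [Set.compl_inter, compl_compl]
    exact SimpleGraph.induce_union_connected hCconn.preconnected hDcconn.preconnected n2
  have hcc4 : (G.induce (Cᶜ ∩ Dᶜ)ᶜ).Connected := by
    rw [Set.compl_inter, compl_compl, compl_compl]
    exact SimpleGraph.induce_union_connected hCconn.preconnected hDconn.preconnected n1
  -- submodularity
  have s14 : weight G (C ∩ D) + weight G (Cᶜ ∩ Dᶜ) ≤ weight G C + weight G D :=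
    weight_submod hfinC hfinD
  have s23 : weight G (C ∩ Dᶜ) + weight G (Cᶜ ∩ D) ≤ weight G C + weight G D := by
    have h := weight_submod (C := C) (D := Dᶜ) hfinC hfinDc
    rw [compl_compl, weight_compl] at h
    exact h
  -- the counting inequalities
  have cnt14 : mdeg G k (C ∩ D) + mdeg G k (Cᶜ ∩ Dᶜ) + 2 ≤ mdeg G k C + mdeg G k D :=
    count_key hCk hDk hcross
  have cnt23 : mdeg G k (C ∩ Dᶜ) + mdeg G k (Cᶜ ∩ D) + 2 ≤ mdeg G k C + mdeg G k D := by
    have hDck : IsCutLe G k Dᶜ := ⟨isCut_compl hDk.1, by rw [weight_compl]; exact hDk.2⟩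
    have hcross' : ¬ Nested C Dᶜ := by
      intro h
      apply hcross
      unfold Nested at h ⊢
      rw [compl_compl] at h
      tauto
    have h := count_key hCk hDck hcross'
    rw [compl_compl, mdeg_compl] at h
    exact h
  -- optimality
  have optα : ∀ S ∈ cutsMin G α, mdeg G k C ≤ mdeg G k S := hCopt.2
  have optβ : ∀ S ∈ cutsMin G β, mdeg G k D ≤ mdeg G k S := hDopt.2
  -- the corner keys
  have keyα : ∀ S : Set V, (edgeBoundary G S).Finite → (G.induce Sᶜ).Connected →
      (Set.range α ∩ S).Infinite → (Set.range α ∩ Sᶜ).Infinite →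
      weight G C ≤ weight G S ∧ (weight G S ≤ weight G C → S ∈ cutsMin G α) :=
    fun S hf hcc hi hic => corner_key hconn hCmin hf hcc hi hic
  have keyβ : ∀ S : Set V, (edgeBoundary G S).Finite → (G.induce Sᶜ).Connected →
      (Set.range β ∩ S).Infinite → (Set.range β ∩ Sᶜ).Infinite →
      weight G D ≤ weight G S ∧ (weight G S ≤ weight G D → S ∈ cutsMin G β) :=
    fun S hf hcc hi hic => corner_key hconn hDmin hf hcc hi hic
  -- splitting the infinite sides into corners
  have hsplit2 : ∀ (γ : ℤ → V) (T X Y : Set V), T = X ∪ Y →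
      (Set.range γ ∩ T).Infinite →
      (Set.range γ ∩ X).Infinite ∨ (Set.range γ ∩ Y).Infinite := by
    intro γ T X Y hT hinf
    rw [hT, Set.inter_union_distrib_left] at hinf
    exact Set.infinite_union.mp hinf
  have hA : (Set.range α ∩ (C ∩ D)).Infinite ∨ (Set.range α ∩ (C ∩ Dᶜ)).Infinite := by
    refine hsplit2 α C _ _ ?_ hCsplit.2.1
    ext x; by_cases hx : x ∈ D <;> simp [hx]
  have hA' : (Set.range α ∩ (Cᶜ ∩ D)).Infinite ∨ (Set.range α ∩ (Cᶜ ∩ Dᶜ)).Infinite := by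
    refine hsplit2 α Cᶜ _ _ ?_ hCsplit.2.2
    ext x; by_cases hx : x ∈ D <;> simp [hx]
  have hB : (Set.range β ∩ (C ∩ D)).Infinite ∨ (Set.range β ∩ (Cᶜ ∩ D)).Infinite := by
    refine hsplit2 β D _ _ ?_ hDsplit.2.1
    ext x; by_cases hx : x ∈ C <;> simp [hx]
  have hB' : (Set.range β ∩ (C ∩ Dᶜ)).Infinite ∨ (Set.range β ∩ (Cᶜ ∩ Dᶜ)).Infinite := by
    refine hsplit2 β Dᶜ _ _ ?_ hDsplit.2.2
    ext x; by_cases hx : x ∈ C <;> simp [hx]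
  -- corner disjointness inclusions, used to feed `corner_key` with complement-infiniteness
  have i1to2c : (C ∩ D : Set V) ⊆ (C ∩ Dᶜ)ᶜ := fun x hx hc => hc.2 hx.2
  have i1to3c : (C ∩ D : Set V) ⊆ (Cᶜ ∩ D)ᶜ := fun x hx hc => hc.1 hx.1
  have i1to4c : (C ∩ D : Set V) ⊆ (Cᶜ ∩ Dᶜ)ᶜ := fun x hx hc => hc.1 hx.1
  have i2to1c : (C ∩ Dᶜ : Set V) ⊆ (C ∩ D)ᶜ := fun x hx hc => hx.2 hc.2
  have i2to3c : (C ∩ Dᶜ : Set V) ⊆ (Cᶜ ∩ D)ᶜ := fun x hx hc => hc.1 hx.1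
  have i2to4c : (C ∩ Dᶜ : Set V) ⊆ (Cᶜ ∩ Dᶜ)ᶜ := fun x hx hc => hc.1 hx.1
  have i3to1c : (Cᶜ ∩ D : Set V) ⊆ (C ∩ D)ᶜ := fun x hx hc => hx.1 hc.1
  have i3to2c : (Cᶜ ∩ D : Set V) ⊆ (C ∩ Dᶜ)ᶜ := fun x hx hc => hx.1 hc.1
  have i3to4c : (Cᶜ ∩ D : Set V) ⊆ (Cᶜ ∩ Dᶜ)ᶜ := fun x hx hc => hc.2 hx.2
  have i4to1c : (Cᶜ ∩ Dᶜ : Set V) ⊆ (C ∩ D)ᶜ := fun x hx hc => hx.1 hc.1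
  have i4to2c : (Cᶜ ∩ Dᶜ : Set V) ⊆ (C ∩ Dᶜ)ᶜ := fun x hx hc => hx.1 hc.1
  have i4to3c : (Cᶜ ∩ Dᶜ : Set V) ⊆ (Cᶜ ∩ D)ᶜ := fun x hx hc => hx.2 hc.2
  have mono : ∀ (γ : ℤ → V) {X Y : Set V}, X ⊆ Y → (Set.range γ ∩ X).Infinite →
      (Set.range γ ∩ Y).Infinite :=
    fun γ _ _ hXY h => h.mono (Set.inter_subset_inter_right _ hXY)
  rcases hA with A1 | A2 <;> rcases hA' with A3 | A4 <;>
    rcases hB with B1 | B3 <;> rcases hB' with B2 | B4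
  -- (A1,A3,B1,B2) : style S1
  · obtain ⟨lbX, upX⟩ := keyα (Cᶜ ∩ D) hf3 hcc3 A3 (mono α i1to3c A1)
    obtain ⟨lbY, upY⟩ := keyβ (C ∩ Dᶜ) hf2 hcc2 B2 (mono β i1to2c B1)
    obtain ⟨e1, e2⟩ := arithA lbX lbY s23
    exact engA (optα _ (upX e1)) (optβ _ (upY e2)) cnt23
  -- (A1,A3,B1,B4) : style S2
  · obtain ⟨lbX, upX⟩ := keyα (C ∩ D) hf1 hcc1 A1 (mono α i3to1c A3)
    obtain ⟨lbY, upY⟩ := keyβ (Cᶜ ∩ Dᶜ) hf4 hcc4 B4 (mono β i1to4c B1)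
    obtain ⟨e1, e2⟩ := arithB lbX lbY s14
    exact engB (optα _ (upX e1)) (optβ _ (upY e2)) cnt14
  -- (A1,A3,B3,B2) : style S1
  · obtain ⟨lbX, upX⟩ := keyα (Cᶜ ∩ D) hf3 hcc3 A3 (mono α i1to3c A1)
    obtain ⟨lbY, upY⟩ := keyβ (C ∩ Dᶜ) hf2 hcc2 B2 (mono β i3to2c B3)
    obtain ⟨e1, e2⟩ := arithA lbX lbY s23
    exact engA (optα _ (upX e1)) (optβ _ (upY e2)) cnt23
  -- (A1,A3,B3,B4) : style S2
  · obtain ⟨lbX, upX⟩ := keyα (C ∩ D) hf1 hcc1 A1 (mono α i3to1c A3)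
    obtain ⟨lbY, upY⟩ := keyβ (Cᶜ ∩ Dᶜ) hf4 hcc4 B4 (mono β i3to4c B3)
    obtain ⟨e1, e2⟩ := arithB lbX lbY s14
    exact engB (optα _ (upX e1)) (optβ _ (upY e2)) cnt14
  -- (A1,A4,B1,B2) : style S5
  · obtain ⟨lbX, upX⟩ := keyα (Cᶜ ∩ Dᶜ) hf4 hcc4 A4 (mono α i1to4c A1)
    obtain ⟨lbY, upY⟩ := keyβ (C ∩ D) hf1 hcc1 B1 (mono β i2to1c B2)
    obtain ⟨e1, e2⟩ := arithA lbX lbY s14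
    exact engA (optα _ (upX e1)) (optβ _ (upY e2)) cnt14
  -- (A1,A4,B1,B4) : style S2
  · obtain ⟨lbX, upX⟩ := keyα (C ∩ D) hf1 hcc1 A1 (mono α i4to1c A4)
    obtain ⟨lbY, upY⟩ := keyβ (Cᶜ ∩ Dᶜ) hf4 hcc4 B4 (mono β i1to4c B1)
    obtain ⟨e1, e2⟩ := arithB lbX lbY s14
    exact engB (optα _ (upX e1)) (optβ _ (upY e2)) cnt14
  -- (A1,A4,B3,B2) : style S7 (AABB)
  · obtain ⟨lb1, up1⟩ := keyα (C ∩ D) hf1 hcc1 A1 (mono α i4to1c A4)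
    obtain ⟨lb4, up4⟩ := keyα (Cᶜ ∩ Dᶜ) hf4 hcc4 A4 (mono α i1to4c A1)
    obtain ⟨lb2, up2⟩ := keyβ (C ∩ Dᶜ) hf2 hcc2 B2 (mono β i3to2c B3)
    obtain ⟨lb3, up3⟩ := keyβ (Cᶜ ∩ D) hf3 hcc3 B3 (mono β i2to3c B2)
    obtain ⟨e1, e4, e2, e3⟩ := arith4 lb1 lb4 lb2 lb3 s14 s23
    exact eng4 (optα _ (up1 e1)) (optα _ (up4 e4)) (optβ _ (up2 e2)) (optβ _ (up3 e3))
      cnt14 cnt23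
  -- (A1,A4,B3,B4) : style S2
  · obtain ⟨lbX, upX⟩ := keyα (C ∩ D) hf1 hcc1 A1 (mono α i4to1c A4)
    obtain ⟨lbY, upY⟩ := keyβ (Cᶜ ∩ Dᶜ) hf4 hcc4 B4 (mono β i3to4c B3)
    obtain ⟨e1, e2⟩ := arithB lbX lbY s14
    exact engB (optα _ (upX e1)) (optβ _ (upY e2)) cnt14
  -- (A2,A3,B1,B2) : style S1
  · obtain ⟨lbX, upX⟩ := keyα (Cᶜ ∩ D) hf3 hcc3 A3 (mono α i2to3c A2)
    obtain ⟨lbY, upY⟩ := keyβ (C ∩ Dᶜ) hf2 hcc2 B2 (mono β i1to2c B1)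
    obtain ⟨e1, e2⟩ := arithA lbX lbY s23
    exact engA (optα _ (upX e1)) (optβ _ (upY e2)) cnt23
  -- (A2,A3,B1,B4) : style S10 (AABB)
  · obtain ⟨lb2, up2⟩ := keyα (C ∩ Dᶜ) hf2 hcc2 A2 (mono α i3to2c A3)
    obtain ⟨lb3, up3⟩ := keyα (Cᶜ ∩ D) hf3 hcc3 A3 (mono α i2to3c A2)
    obtain ⟨lb1, up1⟩ := keyβ (C ∩ D) hf1 hcc1 B1 (mono β i4to1c B4)
    obtain ⟨lb4, up4⟩ := keyβ (Cᶜ ∩ Dᶜ) hf4 hcc4 B4 (mono β i1to4c B1)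
    obtain ⟨e2, e3, e1, e4⟩ := arith4 lb2 lb3 lb1 lb4 s23 s14
    exact eng4 (optα _ (up2 e2)) (optα _ (up3 e3)) (optβ _ (up1 e1)) (optβ _ (up4 e4))
      cnt23 cnt14
  -- (A2,A3,B3,B2) : style S1
  · obtain ⟨lbX, upX⟩ := keyα (Cᶜ ∩ D) hf3 hcc3 A3 (mono α i2to3c A2)
    obtain ⟨lbY, upY⟩ := keyβ (C ∩ Dᶜ) hf2 hcc2 B2 (mono β i3to2c B3)
    obtain ⟨e1, e2⟩ := arithA lbX lbY s23
    exact engA (optα _ (upX e1)) (optβ _ (upY e2)) cnt23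
  -- (A2,A3,B3,B4) : style S13
  · obtain ⟨lbX, upX⟩ := keyα (C ∩ Dᶜ) hf2 hcc2 A2 (mono α i3to2c A3)
    obtain ⟨lbY, upY⟩ := keyβ (Cᶜ ∩ D) hf3 hcc3 B3 (mono β i4to3c B4)
    obtain ⟨e1, e2⟩ := arithB lbX lbY s23
    exact engB (optα _ (upX e1)) (optβ _ (upY e2)) cnt23
  -- (A2,A4,B1,B2) : style S5
  · obtain ⟨lbX, upX⟩ := keyα (Cᶜ ∩ Dᶜ) hf4 hcc4 A4 (mono α i2to4c A2)
    obtain ⟨lbY, upY⟩ := keyβ (C ∩ D) hf1 hcc1 B1 (mono β i2to1c B2)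
    obtain ⟨e1, e2⟩ := arithA lbX lbY s14
    exact engA (optα _ (upX e1)) (optβ _ (upY e2)) cnt14
  -- (A2,A4,B1,B4) : style S5
  · obtain ⟨lbX, upX⟩ := keyα (Cᶜ ∩ Dᶜ) hf4 hcc4 A4 (mono α i2to4c A2)
    obtain ⟨lbY, upY⟩ := keyβ (C ∩ D) hf1 hcc1 B1 (mono β i4to1c B4)
    obtain ⟨e1, e2⟩ := arithA lbX lbY s14
    exact engA (optα _ (upX e1)) (optβ _ (upY e2)) cnt14
  -- (A2,A4,B3,B2) : style S13
  · obtain ⟨lbX, upX⟩ := keyα (C ∩ Dᶜ) hf2 hcc2 A2 (mono α i4to2c A4)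
    obtain ⟨lbY, upY⟩ := keyβ (Cᶜ ∩ D) hf3 hcc3 B3 (mono β i2to3c B2)
    obtain ⟨e1, e2⟩ := arithB lbX lbY s23
    exact engB (optα _ (upX e1)) (optβ _ (upY e2)) cnt23
  -- (A2,A4,B3,B4) : style S13
  · obtain ⟨lbX, upX⟩ := keyα (C ∩ Dᶜ) hf2 hcc2 A2 (mono α i4to2c A4)
    obtain ⟨lbY, upY⟩ := keyβ (Cᶜ ∩ D) hf3 hcc3 B3 (mono β i4to3c B4)
    obtain ⟨e1, e2⟩ := arithB lbX lbY s23
    exact engB (optα _ (upX e1)) (optβ _ (upY e2)) cnt23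

lemma simRel_symm (hconn : G.Connected) (hlf : LocallyFiniteGraph G)
    (hacc : AccessibleWith G k)
    (hC : C ∈ COpt G k) (hD : D ∈ COpt G k) (h : SimRel G k C D) : SimRel G k D C := by
  rcases h with h | ⟨hsub, hmin⟩
  · exact Or.inl h.symm
  · refine Or.inr ⟨?_, ?_⟩
    · constructor
      · rw [Set.compl_subset_comm]; exact hsub.1
      · intro hsupset
        exact hsub.2 (by rwa [← Set.subset_compl_comm])
    · intro E hE hDE hEC
      by_contra hne
      have hCc : Cᶜ ⊂ Eᶜ := by
        constructor
        · exact Set.compl_subset_compl.mpr hEC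
        · intro hsupset
          exact hne (Set.Subset.antisymm hEC (Set.compl_subset_compl.mp hsupset))
      have hED : Eᶜ ⊆ D := by rw [Set.compl_subset_comm]; exact hDE.1
      have hEcD := hmin Eᶜ (COpt_compl hE) hCc hED
      exact hDE.2 (by rw [← hEcD, compl_compl])

end Aux

open CFGroups in
/-- In a connected, locally finite, accessible graph (with accessibility
constant `k` fixed), the relation `∼` on `C_opt` is an equivalence relation. -/
theorem simRel_equivalence
    {V : Type u} (G : SimpleGraph V) (hconn : G.Connected)
    (hlf : CFGroups.LocallyFiniteGraph G)
    (k : ℕ) (hacc : CFGroups.AccessibleWith G k) :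
    Equivalence (fun C D : {C : Set V // C ∈ CFGroups.COpt G k} =>
      CFGroups.SimRel G k C.1 D.1) := by
  have hnest : ∀ C D : Set V, C ∈ COpt G k → D ∈ COpt G k → Nested C D :=
    fun C D hC hD => COpt_nested hconn hlf hacc hC hD
  constructor
  · intro C; exact Or.inl rfl
  · intro C D h; exact simRel_symm hconn hlf hacc C.2 D.2 h
  · intro C D F h1 h2
    rcases h1 with h1 | ⟨hCD, minCD⟩
    · simp only [h1]; exact h2
    rcases h2 with h2 | ⟨hDF, minDF⟩
    · rw [← h2]; exact Or.inr ⟨hCD, minCD⟩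
    by_cases hCF : C.1 = F.1
    · exact Or.inl hCF
    have hC := C.2; have hD := D.2; have hF := F.2
    have hDcne : D.1ᶜ.Nonempty := (isCut_of_mem_COpt hD).2.1
    have hFcne : F.1ᶜ.Nonempty := (isCut_of_mem_COpt hF).2.1
    have hCcne : C.1ᶜ.Nonempty := (isCut_of_mem_COpt hC).2.1
    rcases simRel_symm hconn hlf hacc hC hD (Or.inr ⟨hCD, minCD⟩) with hdc | ⟨hDC, minDC⟩
    · rw [← hdc]; exact Or.inr ⟨hDF, minDF⟩
    have hnotCF : ¬ C.1 ⊆ F.1 := fun h => hCF (minDF C.1 hC hDC h)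
    have hnotFC : ¬ F.1 ⊆ C.1 := fun h => hCF ((minDC F.1 hF hDF h).symm)
    rcases hnest C.1 F.1 hC hF with h | h | h | h
    · exact absurd h hnotCF
    · obtain ⟨x, hx⟩ := hDcne
      exact absurd (hDF.1 hx) (h (hDC.1 hx))
    · refine Or.inr ⟨⟨h, ?_⟩, ?_⟩
      · intro hsub
        obtain ⟨x, hx⟩ := hDcne
        exact hsub (hDF.1 hx) (hDC.1 hx)
      · intro E hE hCE hEF
        rcases hnest D.1 E hD hE with h1 | h1 | h1 | h1
        · obtain ⟨x, hx⟩ := hFcne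
          refine absurd ?_ hx
          by_cases hxD : x ∈ D.1
          exacts [hEF (h1 hxD), hDF.1 hxD]
        · obtain ⟨x, hx⟩ := hCcne
          exact absurd (hCE.1 hx) (h1 (hCD.1 hx))
        · have hne : D.1ᶜ ≠ E := by
            intro he
            obtain ⟨x, hx⟩ := hCcne
            have hxE := hCE.1 hx
            rw [← he] at hxE
            exact hxE (hCD.1 hx)
          exact minDF E hE ⟨h1, fun hsub => hne (Set.Subset.antisymm h1 hsub)⟩ hEF
        · have hED : E ⊆ D.1 := Set.compl_subset_compl.mp h1
          have hEeq := minCD E hE hCE hED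
          obtain ⟨x, hx⟩ := hFcne
          refine absurd ?_ hx
          by_cases hxD : x ∈ D.1
          · exact hEF (show x ∈ E by rw [hEeq]; exact hxD)
          · exact hDF.1 hxD
    · exact absurd (Set.compl_subset_compl.mp h) hnotFC
end

section
/- Let Γ be a connected, locally finite graph such that Aut(Γ)\Γ is finite, and let k ∈ ℕ. Then the canonical action of Aut(Γ) on the set of k-cuts of Γ has only finitely many orbits. In particular, if Γ is moreover accessible, then Aut(Γ) acts with finitely many orbits on C_opt and on the structure tree T(C_opt). -/
open Pointwise

universe u

section AuxFMO

open CFGroups SimpleGraph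

variable {V : Type u} {G : SimpleGraph V}

namespace AuxFMO

/-! ### Walk crossing lemmas -/

lemma cross_of_walk' {S : Set V} : ∀ (a b : V), G.Walk a b → a ∈ S → b ∉ S →
    ∃ u v : V, G.Adj u v ∧ u ∈ S ∧ v ∉ S
  | _, _, SimpleGraph.Walk.nil, ha, hb => absurd ha hb
  | a, b, @SimpleGraph.Walk.cons _ _ _ c _ h p, ha, hb => by
    by_cases hc : c ∈ S
    · exact cross_of_walk' c b p hc hb
    · exact ⟨a, c, h, ha, hc⟩

lemma cross_of_walk {T S : Set V} : ∀ (a b : ↥T), (G.induce T).Walk a b →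
    (a : V) ∈ S → (b : V) ∉ S →
    ∃ u v : V, G.Adj u v ∧ u ∈ S ∧ v ∉ S ∧ u ∈ T ∧ v ∈ T
  | _, _, SimpleGraph.Walk.nil, ha, hb => absurd ha hb
  | a, b, @SimpleGraph.Walk.cons _ _ _ c _ h p, ha, hb => by
    by_cases hc : (c : V) ∈ S
    · exact cross_of_walk c b p hc hb
    · exact ⟨a, c, h, ha, hc, a.2, c.2⟩

lemma mem_of_walk_closed {H : SimpleGraph V} {A : Set V}
    (hcl : ∀ x y, H.Adj x y → x ∈ A → y ∈ A) :
    ∀ (a b : V), H.Walk a b → a ∈ A → b ∈ A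
  | _, _, SimpleGraph.Walk.nil, ha => ha
  | a, b, @SimpleGraph.Walk.cons _ _ _ c _ h p, ha =>
      mem_of_walk_closed hcl c b p (hcl _ _ h ha)

lemma reachable_induce_of_walk {H : SimpleGraph V} {A : Set V}
    (hle : ∀ x y, H.Adj x y → G.Adj x y)
    (hcl : ∀ x y, H.Adj x y → x ∈ A → y ∈ A) :
    ∀ (a b : V), H.Walk a b → ∀ (ha : a ∈ A) (hb : b ∈ A),
      (G.induce A).Reachable ⟨a, ha⟩ ⟨b, hb⟩
  | _, _, SimpleGraph.Walk.nil, _, _ => SimpleGraph.Reachable.refl _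
  | a, b, @SimpleGraph.Walk.cons _ _ _ c _ h p, ha, hb => by
    have hc : c ∈ A := hcl _ _ h ha
    have hadj : (G.induce A).Adj ⟨a, ha⟩ ⟨c, hc⟩ := by
      simpa using hle _ _ h
    exact hadj.reachable.trans (reachable_induce_of_walk hle hcl c b p hc hb)

/-! ### Boundary facts -/

lemma exists_boundary_edge (hconn : G.Connected) {C : Set V} (h1 : C.Nonempty)
    (h2 : Cᶜ.Nonempty) : (edgeBoundary G C).Nonempty := by
  obtain ⟨a, ha⟩ := h1
  obtain ⟨b, hb⟩ := h2
  obtain ⟨w⟩ := hconn.preconnected a b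
  obtain ⟨u, v, hadj, hu, hv⟩ := cross_of_walk' a b w ha hb
  exact ⟨(u, v), hadj, hu, hv⟩

/-- Distinct cuts have incomparable (oriented) edge boundaries. -/
lemma eq_of_edgeBoundary_subset {C D : Set V} (hC : IsCut G C) (hD : IsCut G D)
    (hsub : edgeBoundary G D ⊆ edgeBoundary G C)
    (hne : (edgeBoundary G D).Nonempty) : C = D := by
  obtain ⟨⟨a, b⟩, hab⟩ := hne
  obtain ⟨hadj, haD, hbD⟩ := hab
  have habC := hsub ⟨hadj, haD, hbD⟩
  have haC : a ∈ C := habC.2.1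
  have hbC : b ∉ C := habC.2.2
  apply Set.Subset.antisymm
  · intro v hvC
    by_contra hvD
    obtain ⟨w⟩ := hC.2.2.1.preconnected ⟨v, hvC⟩ ⟨a, haC⟩
    obtain ⟨u', w', hadj', hu', hw', hu'C, hw'C⟩ :=
      cross_of_walk (S := Dᶜ) _ _ w hvD (fun h => h haD)
    exact (hsub (⟨hadj'.symm, Set.notMem_compl_iff.mp hw', hu'⟩ :
      (w', u') ∈ edgeBoundary G D)).2.2 hu'C
  · intro v hvD
    by_contra hvC
    obtain ⟨w⟩ := hC.2.2.2.1.preconnected ⟨v, hvC⟩ ⟨b, hbC⟩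
    obtain ⟨u', w', hadj', hu', hw', hu'C, hw'C⟩ :=
      cross_of_walk (S := D) _ _ w hvD hbD
    exact hu'C (hsub (⟨hadj', hu', hw'⟩ : (u', w') ∈ edgeBoundary G D)).2.1

/-! ### Thomassen–Woess finiteness: only finitely many `k`-cuts across a fixed edge. -/

lemma finite_cuts_through (G : SimpleGraph V) (k : ℕ) {x y : V} (hxy : G.Adj x y) :
    {C : Set V | IsCutLe G k C ∧ x ∈ C ∧ y ∉ C}.Finite := by
  classical
  by_contra hinf'
  have hinf : {C : Set V | IsCutLe G k C ∧ x ∈ C ∧ y ∉ C}.Infinite := hinf'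
  obtain f := hinf.natEmbedding
  set U : Ultrafilter ℕ := Filter.hyperfilter ℕ with hU
  set Cn : ℕ → Set V := fun n => (f n).1 with hCn
  have hprop : ∀ n, IsCutLe G k (Cn n) ∧ x ∈ Cn n ∧ y ∉ Cn n := fun n => (f n).2
  set A : Set V := {v | {n | v ∈ Cn n} ∈ (U : Filter ℕ)} with hA
  have hmemA : ∀ v : V, v ∈ A ↔ {n | v ∈ Cn n} ∈ (U : Filter ℕ) := fun v => Iff.rfl
  have hnotA : ∀ v : V, v ∉ A → {n | v ∉ Cn n} ∈ (U : Filter ℕ) := by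
    intro v hv
    exact Ultrafilter.compl_mem_iff_notMem.mpr hv
  have hxA : x ∈ A := by
    rw [hmemA]
    have : {n | x ∈ Cn n} = Set.univ := Set.eq_univ_of_forall fun n => (hprop n).2.1
    rw [this]; exact Filter.univ_mem
  have hyA : y ∉ A := by
    intro h
    obtain ⟨n, hn⟩ := Filter.nonempty_of_mem ((hmemA y).mp h)
    exact (hprop n).2.2 hn
  have hedge : ∀ p : V × V, p ∈ edgeBoundary G A →
      {n | p ∈ edgeBoundary G (Cn n)} ∈ (U : Filter ℕ) := by
    rintro ⟨u, v⟩ ⟨hadj, hu, hv⟩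
    refine Filter.mem_of_superset (Filter.inter_mem ((hmemA u).mp hu) (hnotA v hv)) ?_
    rintro n ⟨hn1, hn2⟩
    exact ⟨hadj, hn1, hn2⟩
  have hbd : ∀ T : Set (V × V), T ⊆ edgeBoundary G A → T.Finite → T.ncard ≤ k := by
    intro T hTsub hTfin
    have hmem : (⋂ p ∈ T, {n | p ∈ edgeBoundary G (Cn n)}) ∈ (U : Filter ℕ) :=
      (Filter.biInter_mem hTfin).mpr fun p hp => hedge p (hTsub hp)
    obtain ⟨n, hn⟩ := Filter.nonempty_of_mem hmem
    simp only [Set.mem_iInter] at hn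
    calc T.ncard ≤ (edgeBoundary G (Cn n)).ncard :=
          Set.ncard_le_ncard (fun p hp => hn p hp) (hprop n).1.1.2.2.2.2
      _ ≤ k := (hprop n).1.2
  have hfinA : (edgeBoundary G A).Finite := by
    by_contra hEinf'
    have hEinf : (edgeBoundary G A).Infinite := hEinf'
    obtain ⟨T, hTsub, hTfin, hTcard⟩ := hEinf.exists_subset_ncard_eq (k + 1)
    have := hbd T hTsub hTfin
    omega
  have hwA : weight G A ≤ k := hbd _ subset_rfl hfinA
  have hMsub : {n | edgeBoundary G A ⊆ edgeBoundary G (Cn n)} ∈ (U : Filter ℕ) := by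
    have hmem : (⋂ p ∈ edgeBoundary G A, {n | p ∈ edgeBoundary G (Cn n)}) ∈ (U : Filter ℕ) :=
      (Filter.biInter_mem hfinA).mpr fun p hp => hedge p hp
    refine Filter.mem_of_superset hmem ?_
    intro n hn
    simp only [Set.mem_iInter] at hn
    exact fun p hp => hn p hp
  -- the auxiliary graph with the boundary edges of `A` deleted
  set H : SimpleGraph V :=
    { Adj := fun u v => G.Adj u v ∧ (u, v) ∉ edgeBoundary G A ∧ (v, u) ∉ edgeBoundary G A
      symm := ⟨fun u v h => ⟨h.1.symm, h.2.2, h.2.1⟩⟩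
      loopless := ⟨fun u h => G.loopless.irrefl u h.1⟩ } with hH
  have hHle : ∀ u v, H.Adj u v → G.Adj u v := fun u v h => h.1
  have hclA : ∀ u v, H.Adj u v → u ∈ A → v ∈ A := by
    intro u v h hu
    by_contra hv
    exact h.2.1 ⟨h.1, hu, hv⟩
  have hclA' : ∀ u v, H.Adj u v → u ∈ Aᶜ → v ∈ Aᶜ := by
    intro u v h hu hv
    exact h.2.2 ⟨h.1.symm, hv, hu⟩
  have hSA_sub : ∀ v, H.Reachable x v → v ∈ A := fun v hr =>
    hr.elim fun w => mem_of_walk_closed hclA x v w hxA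
  have hSB_sub : ∀ v, H.Reachable y v → v ∈ Aᶜ := fun v hr =>
    hr.elim fun w => mem_of_walk_closed hclA' y v w hyA
  have hA_sub : ∀ v, v ∈ A → H.Reachable x v := by
    intro v hv
    by_contra hvS
    obtain ⟨n, hn1, hn2⟩ :=
      Filter.nonempty_of_mem (Filter.inter_mem ((hmemA v).mp hv) hMsub)
    obtain ⟨w⟩ := (hprop n).1.1.2.2.1.preconnected ⟨x, (hprop n).2.1⟩ ⟨v, hn1⟩
    obtain ⟨u', w', hadj, hu', hw', hu'T, hw'T⟩ :=
      cross_of_walk (S := {z | H.Reachable x z}) _ _ w (SimpleGraph.Reachable.refl x) hvS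
    have hu'A : u' ∈ A := hSA_sub _ hu'
    by_cases hw'A : w' ∈ A
    · exact hw' (hu'.trans (SimpleGraph.Adj.reachable
        ⟨hadj, fun hb => hb.2.2 hw'A, fun hb => hb.2.2 hu'A⟩))
    · exact (hn2 (⟨hadj, hu'A, hw'A⟩ : (u', w') ∈ edgeBoundary G A)).2.2 hw'T
  have hAc_sub : ∀ v, v ∈ Aᶜ → H.Reachable y v := by
    intro v hv
    by_contra hvS
    obtain ⟨n, hn1, hn2⟩ :=
      Filter.nonempty_of_mem (Filter.inter_mem (hnotA v hv) hMsub)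
    obtain ⟨w⟩ := (hprop n).1.1.2.2.2.1.preconnected ⟨y, (hprop n).2.2⟩ ⟨v, hn1⟩
    obtain ⟨u', w', hadj, hu', hw', hu'T, hw'T⟩ :=
      cross_of_walk (S := {z | H.Reachable y z}) _ _ w (SimpleGraph.Reachable.refl y) hvS
    have hu'A : u' ∈ Aᶜ := hSB_sub _ hu'
    by_cases hw'A : w' ∈ A
    · exact hw'T ((hn2 (⟨hadj.symm, hw'A, hu'A⟩ : (w', u') ∈ edgeBoundary G A)).2.1)
    · exact hw' (hu'.trans (SimpleGraph.Adj.reachable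
        ⟨hadj, fun hb => hu'A hb.2.1, fun hb => hw'A hb.2.1⟩))
  have hconnA : (G.induce A).Connected := by
    rw [SimpleGraph.connected_iff]
    refine ⟨?_, ⟨⟨x, hxA⟩⟩⟩
    intro a b
    obtain ⟨wa⟩ := hA_sub a.1 a.2
    obtain ⟨wb⟩ := hA_sub b.1 b.2
    exact (reachable_induce_of_walk hHle hclA x a.1 wa hxA a.2).symm.trans
      (reachable_induce_of_walk hHle hclA x b.1 wb hxA b.2)
  have hconnAc : (G.induce Aᶜ).Connected := by
    rw [SimpleGraph.connected_iff]
    refine ⟨?_, ⟨⟨y, hyA⟩⟩⟩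
    intro a b
    obtain ⟨wa⟩ := hAc_sub a.1 a.2
    obtain ⟨wb⟩ := hAc_sub b.1 b.2
    exact (reachable_induce_of_walk hHle hclA' y a.1 wa hyA a.2).symm.trans
      (reachable_induce_of_walk hHle hclA' y b.1 wb hyA b.2)
  have hcutA : IsCut G A := ⟨⟨x, hxA⟩, ⟨y, hyA⟩, hconnA, hconnAc, hfinA⟩
  have hnEB : (edgeBoundary G A).Nonempty := ⟨(x, y), hxy, hxA, hyA⟩
  have hfinal : {n | Cn n = A} ∈ (U : Filter ℕ) := by
    refine Filter.mem_of_superset hMsub ?_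
    intro n hn
    exact eq_of_edgeBoundary_subset (hprop n).1.1 hcutA hn hnEB
  have hsing : {n | Cn n = A}.Subsingleton := by
    intro m hm n hn
    exact f.injective (Subtype.ext (hm.trans hn.symm))
  exact hsing.finite.notMem_hyperfilter (Ultrafilter.mem_coe.mp hfinal)

/-! ### Equivariance of the cut notions under graph automorphisms -/

lemma iso_inj (φ : G ≃g G) : Function.Injective (⇑φ : V → V) := φ.toEquiv.injective

lemma image_compl (φ : G ≃g G) (C : Set V) : ⇑φ '' Cᶜ = (⇑φ '' C)ᶜ :=
  Set.image_compl_eq φ.toEquiv.bijective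

lemma symm_image_image (φ : G ≃g G) (C : Set V) : ⇑φ.symm '' (⇑φ '' C) = C := by
  rw [Set.image_image]; simp

lemma image_symm_image (φ : G ≃g G) (C : Set V) : ⇑φ '' (⇑φ.symm '' C) = C := by
  rw [Set.image_image]; simp

lemma edgeBoundary_image (φ : G ≃g G) (C : Set V) :
    edgeBoundary G (⇑φ '' C) = (fun p : V × V => (φ p.1, φ p.2)) '' edgeBoundary G C := by
  ext ⟨u, v⟩
  constructor
  · rintro ⟨hadj, hu, hv⟩
    obtain ⟨u0, rfl⟩ := φ.toEquiv.surjective u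
    obtain ⟨v0, rfl⟩ := φ.toEquiv.surjective v
    have hu0 : u0 ∈ C := by
      rcases hu with ⟨c, hc, hcu⟩
      have hone : c = u0 := φ.toEquiv.injective hcu
      rwa [hone] at hc
    have hv0 : v0 ∉ C := fun h => hv (Set.mem_image_of_mem _ h)
    exact ⟨(u0, v0), ⟨φ.map_adj_iff.mp hadj, hu0, hv0⟩, rfl⟩
  · rintro ⟨⟨u0, v0⟩, ⟨hadj, hu0, hv0⟩, heq⟩
    have h1 : φ u0 = u := congrArg Prod.fst heq
    have h2 : φ v0 = v := congrArg Prod.snd heq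
    subst h1
    subst h2
    refine ⟨φ.map_adj_iff.mpr hadj, Set.mem_image_of_mem _ hu0, fun h => ?_⟩
    rcases h with ⟨c, hc, hcu⟩
    have hone : c = v0 := φ.toEquiv.injective hcu
    rw [hone] at hc
    exact hv0 hc

lemma weight_image (φ : G ≃g G) (C : Set V) : weight G (⇑φ '' C) = weight G C := by
  unfold CFGroups.weight
  rw [edgeBoundary_image]
  exact Set.ncard_image_of_injective _ (fun p q h =>
    Prod.ext (φ.toEquiv.injective (congrArg Prod.fst h))
      (φ.toEquiv.injective (congrArg Prod.snd h)))

private def induceIso (φ : G ≃g G) (C : Set V) : G.induce C ≃g G.induce (⇑φ '' C) where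
  toEquiv :=
    { toFun := fun a => ⟨φ a.1, Set.mem_image_of_mem _ a.2⟩
      invFun := fun b => ⟨φ.symm b.1, by
        obtain ⟨c, hc, hcb⟩ := b.2
        have hstep : φ.symm b.1 = c := by
          rw [← hcb]
          exact φ.toEquiv.symm_apply_apply c
        rwa [hstep]⟩
      left_inv := fun a => Subtype.ext (φ.toEquiv.symm_apply_apply a.1)
      right_inv := fun b => Subtype.ext (φ.toEquiv.apply_symm_apply b.1) }
  map_rel_iff' := by
    intro a b
    exact φ.map_adj_iff

lemma connected_induce_image (φ : G ≃g G) {C : Set V} (h : (G.induce C).Connected) :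
    (G.induce (⇑φ '' C)).Connected :=
  (induceIso φ C).connected_iff.mp h

lemma isCut_image (φ : G ≃g G) {C : Set V} (h : IsCut G C) : IsCut G (⇑φ '' C) := by
  refine ⟨h.1.image _, ?_, connected_induce_image φ h.2.2.1, ?_, ?_⟩
  · rw [← image_compl]
    exact h.2.1.image _
  · have := connected_induce_image φ h.2.2.2.1
    rwa [image_compl] at this
  · rw [edgeBoundary_image]
    exact h.2.2.2.2.image _

lemma isCut_image_iff (φ : G ≃g G) (C : Set V) : IsCut G (⇑φ '' C) ↔ IsCut G C := by
  constructor
  · intro h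
    have := isCut_image φ.symm h
    rwa [symm_image_image] at this
  · exact isCut_image φ

lemma isCutLe_image (φ : G ≃g G) {k : ℕ} {C : Set V} (h : IsCutLe G k C) :
    IsCutLe G k (⇑φ '' C) := by
  refine ⟨isCut_image φ h.1, ?_⟩
  rw [weight_image]
  exact h.2

lemma nested_image_iff (φ : G ≃g G) (C D : Set V) :
    Nested (⇑φ '' C) (⇑φ '' D) ↔ Nested C D := by
  unfold CFGroups.Nested
  rw [← image_compl φ C, ← image_compl φ D]
  simp only [Set.image_subset_image_iff (iso_inj φ)]

lemma notNested_set_image (φ : G ≃g G) (k : ℕ) (C : Set V) :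
    {D : Set V | IsCutLe G k D ∧ ¬Nested (⇑φ '' C) D} =
      Set.image ⇑φ '' {D : Set V | IsCutLe G k D ∧ ¬Nested C D} := by
  ext D
  simp only [Set.mem_setOf_eq, Set.mem_image]
  constructor
  · rintro ⟨h1, h2⟩
    refine ⟨⇑φ.symm '' D, ⟨isCutLe_image φ.symm h1, fun hn => h2 ?_⟩, image_symm_image φ D⟩
    have := (nested_image_iff φ C (⇑φ.symm '' D)).mpr hn
    rwa [image_symm_image] at this
  · rintro ⟨D0, ⟨h1, h2⟩, rfl⟩
    exact ⟨isCutLe_image φ h1, fun hn => h2 ((nested_image_iff φ C D0).mp hn)⟩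

lemma mdeg_image (φ : G ≃g G) (k : ℕ) (C : Set V) : mdeg G k (⇑φ '' C) = mdeg G k C := by
  unfold CFGroups.mdeg
  rw [notNested_set_image]
  exact Set.ncard_image_of_injective _ (Set.image_injective.mpr (iso_inj φ))

lemma infinite_image_iff' (φ : G ≃g G) {s : Set V} : (⇑φ '' s).Infinite ↔ s.Infinite :=
  Set.infinite_image_iff (iso_inj φ).injOn

lemma mem_cutsSplitting_image_iff (φ : G ≃g G) (α : ℤ → V) (C : Set V) :
    ⇑φ '' C ∈ cutsSplitting G (⇑φ ∘ α) ↔ C ∈ cutsSplitting G α := by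
  show (IsCut G (⇑φ '' C) ∧ _ ∧ _) ↔ (IsCut G C ∧ _ ∧ _)
  rw [isCut_image_iff, ← image_compl, Set.range_comp,
    ← Set.image_inter (iso_inj φ), ← Set.image_inter (iso_inj φ),
    infinite_image_iff', infinite_image_iff']

lemma mem_cutsMin_image_iff (φ : G ≃g G) (α : ℤ → V) (C : Set V) :
    ⇑φ '' C ∈ cutsMin G (⇑φ ∘ α) ↔ C ∈ cutsMin G α := by
  constructor
  · rintro ⟨h1, h2⟩
    refine ⟨(mem_cutsSplitting_image_iff φ α C).mp h1, fun D hD => ?_⟩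
    have h3 := h2 (⇑φ '' D) ((mem_cutsSplitting_image_iff φ α D).mpr hD)
    rwa [weight_image, weight_image] at h3
  · rintro ⟨h1, h2⟩
    refine ⟨(mem_cutsSplitting_image_iff φ α C).mpr h1, fun D hD => ?_⟩
    have hD' : ⇑φ.symm '' D ∈ cutsSplitting G α := by
      have heq : ⇑φ.symm ∘ (⇑φ ∘ α) = α := by funext i; simp
      have := (mem_cutsSplitting_image_iff φ.symm (⇑φ ∘ α) D).mpr hD
      rwa [heq] at this
    have h3 := h2 _ hD'
    rw [weight_image] at h3
    rw [weight_image]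
    exact h3

lemma mem_cutsOpt_image_iff (φ : G ≃g G) (k : ℕ) (α : ℤ → V) (C : Set V) :
    ⇑φ '' C ∈ cutsOpt G k (⇑φ ∘ α) ↔ C ∈ cutsOpt G k α := by
  constructor
  · rintro ⟨h1, h2⟩
    refine ⟨(mem_cutsMin_image_iff φ α C).mp h1, fun D hD => ?_⟩
    have h3 := h2 (⇑φ '' D) ((mem_cutsMin_image_iff φ α D).mpr hD)
    rwa [mdeg_image, mdeg_image] at h3
  · rintro ⟨h1, h2⟩
    refine ⟨(mem_cutsMin_image_iff φ α C).mpr h1, fun D hD => ?_⟩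
    have hD' : ⇑φ.symm '' D ∈ cutsMin G α := by
      have heq : ⇑φ.symm ∘ (⇑φ ∘ α) = α := by funext i; simp
      have := (mem_cutsMin_image_iff φ.symm (⇑φ ∘ α) D).mpr hD
      rwa [heq] at this
    have h3 := h2 _ hD'
    rw [mdeg_image] at h3
    rw [mdeg_image]
    exact h3

lemma mem_COpt_image (φ : G ≃g G) {k : ℕ} {C : Set V} (h : C ∈ COpt G k) :
    ⇑φ '' C ∈ COpt G k := by
  obtain ⟨α, hα, hopt⟩ := h
  exact ⟨⇑φ ∘ α, ⟨φ.toEquiv.injective.comp hα.1,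
    fun i => φ.map_adj_iff.mpr (hα.2 i)⟩, (mem_cutsOpt_image_iff φ k α C).mpr hopt⟩

lemma image_ssubset_iff (φ : G ≃g G) {s t : Set V} : ⇑φ '' s ⊂ ⇑φ '' t ↔ s ⊂ t := by
  rw [Set.ssubset_def, Set.ssubset_def, Set.image_subset_image_iff (iso_inj φ),
    Set.image_subset_image_iff (iso_inj φ)]

lemma simRel_image_iff (φ : G ≃g G) (k : ℕ) (C D : Set V) :
    SimRel G k (⇑φ '' C) (⇑φ '' D) ↔ SimRel G k C D := by
  constructor
  · rintro (h | ⟨h1, h2⟩)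
    · exact Or.inl (Set.image_injective.mpr (iso_inj φ) h)
    · refine Or.inr ⟨?_, ?_⟩
      · rw [← image_compl] at h1
        exact (image_ssubset_iff φ).mp h1
      · intro E hE h3 h4
        have h3' : (⇑φ '' C)ᶜ ⊂ ⇑φ '' E := by
          rw [← image_compl]
          exact (image_ssubset_iff φ).mpr h3
        have h5 := h2 (⇑φ '' E) (mem_COpt_image φ hE) h3' (Set.image_mono h4)
        exact Set.image_injective.mpr (iso_inj φ) h5
  · rintro (h | ⟨h1, h2⟩)
    · exact Or.inl (by rw [h])
    · refine Or.inr ⟨?_, ?_⟩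
      · rw [← image_compl]
        exact (image_ssubset_iff φ).mpr h1
      · intro E hE h3 h4
        have h3' : Cᶜ ⊂ ⇑φ.symm '' E := by
          rw [← image_compl] at h3
          have := (image_ssubset_iff φ.symm).mpr h3
          rwa [symm_image_image] at this
        have h4' : ⇑φ.symm '' E ⊆ D := by
          have := Set.image_mono (f := ⇑φ.symm) h4
          rwa [symm_image_image] at this
        have h5 := h2 (⇑φ.symm '' E) (mem_COpt_image φ.symm hE) h3' h4'
        rw [← image_symm_image φ E, h5]

lemma cls_image (φ : G ≃g G) (k : ℕ) (C : Set V) :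
    cls G k (⇑φ '' C) = Set.image ⇑φ '' cls G k C := by
  ext D
  constructor
  · rintro ⟨hD, hsim⟩
    refine ⟨⇑φ.symm '' D, ⟨mem_COpt_image φ.symm hD, ?_⟩, image_symm_image φ D⟩
    have h := hsim
    rw [← image_symm_image φ D] at h
    exact (simRel_image_iff φ k C (⇑φ.symm '' D)).mp h
  · rintro ⟨D0, ⟨h1, h2⟩, rfl⟩
    exact ⟨mem_COpt_image φ h1, (simRel_image_iff φ k C D0).mpr h2⟩

/-! ### Orbit bookkeeping -/

lemma image_trans (χ φ : G ≃g G) (S : Set V) :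
    ⇑(RelIso.trans χ φ) '' S = ⇑φ '' (⇑χ '' S) := by
  rw [Set.image_image]; rfl

lemma orbit_image_eq (χ : G ≃g G) (C : Set V) :
    (Set.range fun φ : G ≃g G => ⇑φ '' (⇑χ '' C)) = Set.range fun φ : G ≃g G => ⇑φ '' C := by
  ext S
  constructor
  · rintro ⟨φ, rfl⟩
    exact ⟨RelIso.trans χ φ, image_trans χ φ C⟩
  · rintro ⟨φ, rfl⟩
    refine ⟨RelIso.trans χ.symm φ, ?_⟩
    show ⇑(RelIso.trans χ.symm φ) '' (⇑χ '' C) = ⇑φ '' C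
    rw [image_trans χ.symm φ, symm_image_image]

lemma image_image_trans (χ φ : G ≃g G) (X : Set (Set V)) :
    Set.image ⇑(RelIso.trans χ φ) '' X = Set.image ⇑φ '' (Set.image ⇑χ '' X) := by
  rw [Set.image_image]
  exact Set.image_congr' fun S => image_trans χ φ S

lemma orbit_image_eq' (χ : G ≃g G) (X : Set (Set V)) :
    (Set.range fun φ : G ≃g G => Set.image ⇑φ '' (Set.image ⇑χ '' X)) =
      Set.range fun φ : G ≃g G => Set.image ⇑φ '' X := by
  ext S
  constructor
  · rintro ⟨φ, rfl⟩
    exact ⟨RelIso.trans χ φ, image_image_trans χ φ X⟩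
  · rintro ⟨φ, rfl⟩
    refine ⟨RelIso.trans χ.symm φ, ?_⟩
    show Set.image ⇑(RelIso.trans χ.symm φ) '' (Set.image ⇑χ '' X) = Set.image ⇑φ '' X
    rw [image_image_trans χ.symm φ]
    have hinner : Set.image ⇑χ.symm '' (Set.image ⇑χ '' X) = X :=
      (Set.image_image _ _ _).trans
        ((Set.image_congr' fun S => symm_image_image χ S).trans (Set.image_id' X))
    rw [hinner]

lemma finite_range_factor {A : Type u_1} {β : Type u_2} {γ : Type u_3} (f : A → β) (g : A → γ)
    (hfac : ∀ a b, f a = f b → g a = g b) (hf : (Set.range f).Finite) :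
    (Set.range g).Finite := by
  classical
  rcases isEmpty_or_nonempty A with hA | hA
  · rw [Set.range_eq_empty]
    exact Set.finite_empty
  · obtain ⟨a₀⟩ := hA
    have hsub : Set.range g ⊆
        (fun x => if hx : ∃ a, f a = x then g hx.choose else g a₀) '' Set.range f := by
      rintro _ ⟨a, rfl⟩
      have hx : ∃ a', f a' = f a := ⟨a, rfl⟩
      exact ⟨f a, ⟨a, rfl⟩, by
        simp only [dif_pos hx]
        exact hfac _ _ hx.choose_spec⟩
    exact (hf.image _).subset hsub

lemma cOpt_isCutLe {k : ℕ} (hacc : AccessibleWith G k) {C : Set V} (h : C ∈ COpt G k) :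
    IsCutLe G k C := by
  obtain ⟨α, hα, hopt⟩ := h
  obtain ⟨⟨hsplit, hwt⟩, -⟩ := hopt
  obtain ⟨D, hD, hDk⟩ := hacc α hα ⟨C, hsplit⟩
  exact ⟨hsplit.1, le_trans (hwt D hD) hDk⟩

end AuxFMO

end AuxFMO

open CFGroups Pointwise in
/-- If `Aut(Γ)\Γ` is finite, then for every `k` the automorphism group
acts with finitely many orbits on the set of `k`-cuts; in particular, if `Γ` is moreover
accessible (with constant `k`), it acts with finitely many orbits on `C_opt` and on the
vertices of the structure tree `T(C_opt)`. -/
theorem aut_finitely_many_orbits_on_cuts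
    {V : Type u} (G : SimpleGraph V) (hconn : G.Connected)
    (hlf : CFGroups.LocallyFiniteGraph G)
    (horb : CFGroups.AutFinOrbits G) (k : ℕ) :
    (Set.range fun C : {C : Set V // CFGroups.IsCutLe G k C} =>
        Set.range fun φ : G ≃g G => ⇑φ '' C.1).Finite ∧
    (CFGroups.AccessibleWith G k →
      ((Set.range fun C : {C : Set V // C ∈ CFGroups.COpt G k} =>
          Set.range fun φ : G ≃g G => ⇑φ '' C.1).Finite ∧
       (Set.range fun C : {C : Set V // C ∈ CFGroups.COpt G k} =>
          Set.range fun φ : G ≃g G => Set.image ⇑φ '' CFGroups.cls G k C.1).Finite)) := by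
  classical
  have part1 : (Set.range fun C : {C : Set V // CFGroups.IsCutLe G k C} =>
      Set.range fun φ : G ≃g G => ⇑φ '' C.1).Finite := by
    have hR : (Set.range fun e : G.edgeSet =>
        Set.range fun φ : G ≃g G => Sym2.map ⇑φ e.1).Finite := horb.2
    set R : Set (Set (Sym2 V)) := Set.range fun e : G.edgeSet =>
        Set.range fun φ : G ≃g G => Sym2.map ⇑φ e.1 with hRdef
    have hpick : ∀ O ∈ R, ∃ p : V × V, G.Adj p.1 p.2 ∧
        (Set.range fun ψ : G ≃g G => Sym2.map ⇑ψ s(p.1, p.2)) = O := by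
      rintro O ⟨e, rfl⟩
      obtain ⟨a, b, hab⟩ : ∃ a b, s(a, b) = (e.1 : Sym2 V) :=
        Sym2.inductionOn e.1 fun a b => ⟨a, b, rfl⟩
      have he2 : G.Adj a b := by
        rw [← SimpleGraph.mem_edgeSet, hab]
        exact e.2
      exact ⟨(a, b), he2, by rw [hab]⟩
    choose pick hpadj hprange using hpick
    haveI := hR.to_subtype
    set K : Set (Set V) := ⋃ O : ↥R,
        ({C : Set V | CFGroups.IsCutLe G k C ∧ (pick O.1 O.2).1 ∈ C ∧ (pick O.1 O.2).2 ∉ C} ∪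
         {C : Set V | CFGroups.IsCutLe G k C ∧ (pick O.1 O.2).2 ∈ C ∧ (pick O.1 O.2).1 ∉ C})
      with hKdef
    have hKfin : K.Finite := Set.finite_iUnion fun O =>
      (AuxFMO.finite_cuts_through G k (hpadj O.1 O.2)).union
        (AuxFMO.finite_cuts_through G k (hpadj O.1 O.2).symm)
    have cover : ∀ C : Set V, CFGroups.IsCutLe G k C → ∃ χ : G ≃g G, ⇑χ '' C ∈ K := by
      intro C hC
      obtain ⟨⟨x, y⟩, hxy, hxC, hyC⟩ :=
        AuxFMO.exists_boundary_edge hconn hC.1.1 hC.1.2.1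
      have hO : (Set.range fun ψ : G ≃g G => Sym2.map ⇑ψ s(x, y)) ∈ R :=
        ⟨⟨s(x, y), (SimpleGraph.mem_edgeSet G).mpr hxy⟩, rfl⟩
      have hmem : s(x, y) ∈ Set.range fun ψ : G ≃g G =>
          Sym2.map ⇑ψ s((pick _ hO).1, (pick _ hO).2) := by
        rw [hprange _ hO]
        exact ⟨RelIso.refl _, rfl⟩
      obtain ⟨ψ, hψ0⟩ := hmem
      have hψ : Sym2.map ⇑ψ s((pick _ hO).1, (pick _ hO).2) = s(x, y) := hψ0
      rw [Sym2.map_pair_eq, Sym2.eq_iff] at hψ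
      refine ⟨ψ.symm, Set.mem_iUnion.mpr ⟨⟨_, hO⟩, ?_⟩⟩
      have hcut' : CFGroups.IsCutLe G k (⇑ψ.symm '' C) := AuxFMO.isCutLe_image ψ.symm hC
      rcases hψ with ⟨h1, h2⟩ | ⟨h1, h2⟩
      · refine Set.mem_union_left _ ⟨hcut', ⟨x, hxC, ψ.toEquiv.symm_apply_eq.mpr h1.symm⟩, ?_⟩
        rintro ⟨z, hzC, hz⟩
        have hzy : z = y :=
          ((ψ.toEquiv.apply_symm_apply z).symm.trans (congrArg ⇑ψ hz)).trans h2
        rw [hzy] at hzC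
        exact hyC hzC
      · refine Set.mem_union_right _ ⟨hcut', ⟨x, hxC, ψ.toEquiv.symm_apply_eq.mpr h2.symm⟩, ?_⟩
        rintro ⟨z, hzC, hz⟩
        have hzy : z = y :=
          ((ψ.toEquiv.apply_symm_apply z).symm.trans (congrArg ⇑ψ hz)).trans h1
        rw [hzy] at hzC
        exact hyC hzC
    refine Set.Finite.subset (hKfin.image fun D => Set.range fun φ : G ≃g G => ⇑φ '' D) ?_
    rintro _ ⟨C, rfl⟩
    obtain ⟨χ, hχ⟩ := cover C.1 C.2
    exact ⟨⇑χ '' C.1, hχ, AuxFMO.orbit_image_eq χ C.1⟩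
  refine ⟨part1, fun hacc => ?_⟩
  have part2 : (Set.range fun C : {C : Set V // C ∈ CFGroups.COpt G k} =>
      Set.range fun φ : G ≃g G => ⇑φ '' C.1).Finite := by
    refine part1.subset ?_
    rintro _ ⟨C, rfl⟩
    exact ⟨⟨C.1, AuxFMO.cOpt_isCutLe hacc C.2⟩, rfl⟩
  refine ⟨part2, ?_⟩
  refine AuxFMO.finite_range_factor
    (fun C : {C : Set V // C ∈ CFGroups.COpt G k} => Set.range fun φ : G ≃g G => ⇑φ '' C.1)
    (fun C : {C : Set V // C ∈ CFGroups.COpt G k} =>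
      Set.range fun φ : G ≃g G => Set.image ⇑φ '' CFGroups.cls G k C.1) ?_ part2
  intro a b hab
  have hab' : (Set.range fun φ : G ≃g G => ⇑φ '' a.1) =
      Set.range fun φ : G ≃g G => ⇑φ '' b.1 := hab
  have hb1 : b.1 ∈ Set.range fun φ : G ≃g G => ⇑φ '' a.1 := by
    rw [hab']
    refine ⟨RelIso.refl _, ?_⟩
    show ⇑(RelIso.refl G.Adj) '' b.1 = b.1
    rw [show ⇑(RelIso.refl G.Adj) = fun z : V => z from rfl]
    exact Set.image_id' b.1
  obtain ⟨χ, hχ⟩ := hb1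
  have hχ' : ⇑χ '' a.1 = b.1 := hχ
  show (Set.range fun φ : G ≃g G => Set.image ⇑φ '' CFGroups.cls G k a.1) =
    Set.range fun φ : G ≃g G => Set.image ⇑φ '' CFGroups.cls G k b.1
  rw [← hχ', AuxFMO.cls_image, AuxFMO.orbit_image_eq']
end
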